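/- arXiv:2602.19189 — 6 statements merged into one kernel-verified Lean document; each statement's English description precedes it below -/
import Mathlib

section
/- If S is a clique minimal separator of a connected graph G, A is a full component of S (i.e., a connected component of G − S with N_G(A) = S), and B = V \ (A ∪ S), then both A ∪ S and B ∪ S are convex vertex sets of G. -/
open SimpleGraph

variable {V : Type*}

/-- `S` separates `u` from `v` in `G`: `u, v ∉ S` and every walk from `u` to `v` meets `S`. -/
def SepSet (G : SimpleGraph V) (u v : V) (S : Set V) : Prop :=
  u ∉ S ∧ v ∉ S ∧ ∀ p : G.Walk u v, ∃ x ∈ p.support, x ∈ S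

/-- `S` is a minimal `uv`-separator of `G`. -/
def MinSepSet (G : SimpleGraph V) (u v : V) (S : Set V) : Prop :=
  SepSet G u v S ∧ ∀ S' ⊂ S, ¬ SepSet G u v S'

/-- `S` is a clique minimal separator of `G`. -/
def CliqueMinSep (G : SimpleGraph V) (S : Set V) : Prop :=
  G.IsClique S ∧ ∃ u v, MinSepSet G u v S

/-- `S` is a clique separator of `G` (a complete set whose removal disconnects `G`). -/
def CliqueSep (G : SimpleGraph V) (S : Set V) : Prop :=
  G.IsClique S ∧ ∃ u v, SepSet G u v S

/-- The (open) neighborhood of a vertex set `A` in `G`. -/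
def Nbhd (G : SimpleGraph V) (A : Set V) : Set V :=
  {v | v ∉ A ∧ ∃ a ∈ A, G.Adj v a}

/-- `X` is a connected component of the induced subgraph of `G` on `A`:
a maximal subset of `A` inducing a connected subgraph. -/
def CompOf (G : SimpleGraph V) (A X : Set V) : Prop :=
  X.Nonempty ∧ X ⊆ A ∧ (G.induce X).Connected ∧
    ∀ Y, X ⊆ Y → Y ⊆ A → (G.induce Y).Connected → Y = X

/-- `A` is convex in `G`: no two distinct non-adjacent vertices of `A` are joined
by a path whose internal vertices all avoid `A`. -/
def ConvexSet (G : SimpleGraph V) (A : Set V) : Prop :=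
  ∀ u ∈ A, ∀ v ∈ A, u ≠ v → ¬ G.Adj u v →
    ∀ p : G.Walk u v, p.IsPath → ¬ (∀ x ∈ p.support, x ≠ u → x ≠ v → x ∉ A)

/-- `H` induces an atom of `G`: a maximal connected induced subgraph
containing no clique minimal separator. -/
def GraphAtom (G : SimpleGraph V) (H : Set V) : Prop :=
  (G.induce H).Connected ∧ (¬ ∃ S : Set H, CliqueMinSep (G.induce H) S) ∧
  ∀ H', H ⊆ H' → (G.induce H').Connected →
    (¬ ∃ S : Set H', CliqueMinSep (G.induce H') S) → H' = H

/-- `α` is a maximum cardinality search ordering of `G` (smaller labels are chosen later):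
when the vertex `u` receives its label, the already-labeled vertices are those with larger
labels, and `u` maximizes the number of labeled neighbors among all yet-unlabeled vertices. -/
def IsMCS {n : ℕ} (G : SimpleGraph V) (α : V ≃ Fin n) : Prop :=
  ∀ u w : V, α w ≤ α u →
    {x | G.Adj w x ∧ α u < α x}.ncard ≤ {x | G.Adj u x ∧ α u < α x}.ncard


lemma singleton_induce_connected (G : SimpleGraph V) (y : V) :
    (G.induce {y}).Connected := by
  have : Nonempty ({y} : Set V) := ⟨⟨y, rfl⟩⟩
  constructor
  intro a b
  have : a = b := Subtype.ext (by
    have ha := a.2; have hb := b.2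
    simp only [Set.mem_singleton_iff] at ha hb
    rw [ha, hb])
  subst this
  exact SimpleGraph.Reachable.refl a

/-- If `A` is a component of `Sᶜ`, then every neighbor of a vertex of `A` lies in `A ∪ S`. -/
lemma compOf_closed (G : SimpleGraph V) (S A : Set V) (hA : CompOf G Sᶜ A)
    {x y : V} (hx : x ∈ A) (hadj : G.Adj x y) : y ∈ A ∪ S := by
  by_contra hy
  simp only [Set.mem_union, not_or] at hy
  obtain ⟨hne, hAsub, hconn, hmax⟩ := hA
  have hconn' : (G.induce (A ∪ {y})).Connected :=
    G.connected_induce_union hconn.preconnected (singleton_induce_connected G y).preconnected hx rfl hadj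
  have hsub : A ∪ {y} ⊆ Sᶜ := by
    intro z hz
    rcases hz with hz | hz
    · exact hAsub hz
    · rw [hz]; exact hy.2
  have := hmax (A ∪ {y}) Set.subset_union_left hsub hconn'
  exact hy.1 (this ▸ Set.mem_union_right A rfl)

/-- A path between distinct non-adjacent vertices has a second vertex. -/
lemma second_vertex (G : SimpleGraph V) {u v : V} (p : G.Walk u v) (hp : p.IsPath)
    (hadj : ¬ G.Adj u v) :
    u = v ∨ ∃ w, G.Adj u w ∧ w ∈ p.support ∧ w ≠ u ∧ w ≠ v := by
  cases p with
  | nil => exact Or.inl rfl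
  | @cons _ w _ h q =>
    cases q with
    | nil => exact absurd h hadj
    | @cons _ z _ h' r =>
      right
      refine ⟨w, h, ?_, ?_, ?_⟩
      · simp [SimpleGraph.Walk.support_cons]
      · rintro rfl
        exact (SimpleGraph.Walk.cons_isPath_iff _ _).mp hp |>.2
          (SimpleGraph.Walk.start_mem_support _)
      · rintro rfl
        have hq : ((SimpleGraph.Walk.cons h' r)).IsPath :=
          ((SimpleGraph.Walk.cons_isPath_iff _ _).mp hp).1
        exact ((SimpleGraph.Walk.cons_isPath_iff _ _).mp hq).2 r.end_mem_support

/-- If every neighbor of `C` lies in `C ∪ S` and `S` is a clique, then `C ∪ S` is convex. -/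
lemma convex_of_closed (G : SimpleGraph V) (S C : Set V) (hclique : G.IsClique S)
    (hcl : ∀ x ∈ C, ∀ y, G.Adj x y → y ∈ C ∪ S) : ConvexSet G (C ∪ S) := by
  have key : ∀ (a b : V), a ∈ C → ∀ q : G.Walk a b, q.IsPath → a ≠ b → ¬ G.Adj a b →
      ¬ (∀ x ∈ q.support, x ≠ a → x ≠ b → x ∉ C ∪ S) := by
    intro a b ha q hq hne hadj h
    rcases second_vertex G q hq hadj with rfl | ⟨w, hw, hwsup, hwa, hwb⟩
    · exact hne rfl
    · exact h w hwsup hwa hwb (hcl a ha w hw)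
  intro u hu v hv hne hadj p hp h
  rcases hu with hu | hu
  · exact key u v hu p hp hne hadj h
  · rcases hv with hv | hv
    · refine key v u hv p.reverse (hp.reverse) hne.symm (fun h' => hadj h'.symm) ?_ 
      intro x hx hxv hxu
      exact h x (by simpa using hx) hxu hxv
    · exact hadj (hclique hu hv hne)

theorem clique_min_sep_decomposition_convex [Fintype V]
    (G : SimpleGraph V) (hG : G.Connected) (S A B : Set V)
    (hS : CliqueMinSep G S) (hA : CompOf G Sᶜ A) (hfull : Nbhd G A = S)
    (hB : B = (A ∪ S)ᶜ) :
    ConvexSet G (A ∪ S) ∧ ConvexSet G (B ∪ S) := by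
  have hAcl : ∀ x ∈ A, ∀ y, G.Adj x y → y ∈ A ∪ S :=
    fun x hx y hadj => compOf_closed G S A hA hx hadj
  have hBcl : ∀ x ∈ B, ∀ y, G.Adj x y → y ∈ B ∪ S := by
    intro x hx y hadj
    subst hB
    simp only [Set.mem_compl_iff, Set.mem_union, not_or] at hx
    by_cases hyS : y ∈ S
    · exact Or.inr hyS
    left
    simp only [Set.mem_compl_iff, Set.mem_union, not_or]
    refine ⟨fun hyA => ?_, hyS⟩
    have := compOf_closed G S A hA hyA hadj.symm
    rcases this with h | h
    · exact hx.1 h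
    · exact hx.2 h
  exact ⟨convex_of_closed G S A hS.1 hAcl, convex_of_closed G S B hS.1 hBcl⟩
end

section
/- Let G be a connected undirected graph with a maximum cardinality search (MCS) ordering α, and let v be the vertex with the smallest label under α. Then the convex hull H of the closed neighborhood N_G[v] induces an atom of G; i.e., G_H contains no clique minimal separator, and H is maximal among connected vertex sets with this property. -/
open SimpleGraph

variable {V : Type*}

/-! ### Auxiliary lemmas -/

section AuxWalk

variable (G : SimpleGraph V)

lemma walk_append_mem {a b c : V} (p : G.Walk a b) (q : G.Walk b c) {z : V}
    (hz : z ∈ (p.append q).support) : z ∈ p.support ∨ z ∈ q.support := by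
  rw [Walk.support_append] at hz
  rcases List.mem_append.1 hz with h | h
  · exact Or.inl h
  · exact Or.inr (List.mem_of_mem_tail h)

lemma lift_walk {A : Set V} : ∀ {a b : V} (q : G.Walk a b), (∀ z ∈ q.support, z ∈ A) →
    ∀ (ha : a ∈ A) (hb : b ∈ A),
    ∃ p : (G.induce A).Walk ⟨a, ha⟩ ⟨b, hb⟩, ∀ x ∈ p.support, (x : V) ∈ q.support := by
  intro a b q
  induction q with
  | nil => exact fun hq ha hb => ⟨Walk.nil, by simp⟩
  | @cons a c b h q ih =>
    intro hq ha hb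
    have hc : c ∈ A := hq _ (by simp)
    obtain ⟨p, hp⟩ := ih (fun z hz => hq z (by simp [hz])) hc hb
    refine ⟨Walk.cons (by simp [h]) p, ?_⟩
    intro x hx
    rw [Walk.support_cons] at hx
    rcases List.mem_cons.1 hx with rfl | hx
    · simp
    · simp [hp x hx]

lemma proj_walk {A : Set V} : ∀ {a b : ↥A} (p : (G.induce A).Walk a b),
    ∃ q : G.Walk ↑a ↑b, (∀ z ∈ q.support, z ∈ A) ∧ ∀ z ∈ q.support, ∃ x ∈ p.support, ↑x = z := by
  intro a b p
  induction p with
  | nil => exact ⟨Walk.nil, by simp, by simp⟩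
  | @cons a c b h p ih =>
    obtain ⟨q, hq1, hq2⟩ := ih
    have hadj : G.Adj ↑a ↑c := by simpa using h
    refine ⟨Walk.cons hadj q, ?_, ?_⟩
    · intro z hz
      rw [Walk.support_cons] at hz
      rcases List.mem_cons.1 hz with rfl | hz
      · exact a.2
      · exact hq1 z hz
    · intro z hz
      rw [Walk.support_cons] at hz
      rcases List.mem_cons.1 hz with rfl | hz
      · exact ⟨a, by simp⟩
      · obtain ⟨x, hx1, hx2⟩ := hq2 z hz
        exact ⟨x, by simp [hx1], hx2⟩

end AuxWalk

section AuxConvex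

variable {G : SimpleGraph V} {H : Set V}

lemma convex_extract (hconv : ConvexSet G H) :
    ∀ (N : ℕ) {a b : V} (p : G.Walk a b), p.length ≤ N → p.IsPath → a ∈ H → b ∈ H →
    ∀ (S : Set V), (∀ z ∈ p.support, z ∉ S) →
    ∃ q : G.Walk a b, (∀ z ∈ q.support, z ∈ H) ∧ (∀ z ∈ q.support, z ∉ S) := by
  classical
  intro N
  induction N with
  | zero =>
    intro a b p hlen hp ha hb S hS
    have : a = b := p.eq_of_length_eq_zero (Nat.le_zero.1 hlen)
    subst this
    exact ⟨Walk.nil, by simpa using ha, by simpa using hS a p.start_mem_support⟩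
  | succ N ih =>
    intro a b p hlen hp ha hb S hS
    by_cases hab : a = b
    · subst hab
      exact ⟨Walk.nil, by simpa using ha, by simpa using hS a p.start_mem_support⟩
    by_cases hadj : G.Adj a b
    · refine ⟨Walk.cons hadj Walk.nil, ?_, ?_⟩
      · intro z hz
        simp only [Walk.support_cons, Walk.support_nil, List.mem_cons, List.mem_singleton] at hz
        rcases hz with rfl | rfl | h
        · exact ha
        · exact hb
        · exact absurd h (by simp)
      · intro z hz
        simp only [Walk.support_cons, Walk.support_nil, List.mem_cons, List.mem_singleton] at hz
        rcases hz with rfl | rfl | h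
        · exact hS _ p.start_mem_support
        · exact hS _ p.end_mem_support
        · exact absurd h (by simp)
    · have hcx := hconv a ha b hb hab hadj p hp
      push_neg at hcx
      obtain ⟨x, hxsup, hxa, hxb, hxH⟩ := hcx
      have hxH' : x ∈ H := hxH
      set p1 := p.takeUntil x hxsup with hp1
      set p2 := p.dropUntil x hxsup with hp2
      have hspec := p.take_spec hxsup
      have hlensum : p1.length + p2.length = p.length := by
        rw [← Walk.length_append, hspec]
      have h1ne : p1.length ≠ 0 := fun h0 => hxa (p1.eq_of_length_eq_zero h0).symm
      have h2ne : p2.length ≠ 0 := fun h0 => hxb (p2.eq_of_length_eq_zero h0)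
      have hp1p : p1.IsPath := hp.takeUntil hxsup
      have hp2p : p2.IsPath := hp.dropUntil hxsup
      obtain ⟨q1, hq1H, hq1S⟩ := ih p1 (by omega) hp1p ha hxH' S
        (fun z hz => hS z (Walk.support_takeUntil_subset p hxsup hz))
      obtain ⟨q2, hq2H, hq2S⟩ := ih p2 (by omega) hp2p hxH' hb S
        (fun z hz => hS z (Walk.support_dropUntil_subset p hxsup hz))
      refine ⟨q1.append q2, ?_, ?_⟩
      · intro z hz
        rcases walk_append_mem G q1 q2 hz with h | h
        · exact hq1H z h
        · exact hq2H z h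
      · intro z hz
        rcases walk_append_mem G q1 q2 hz with h | h
        · exact hq1S z h
        · exact hq2S z h

/-- A clique together with everything that reaches an anchor avoiding the clique
is convex. -/
lemma clique_reach_convex {S : Set V} (hS : G.IsClique S) (anchors : Set V) :
    ConvexSet G (S ∪ {x | x ∉ S ∧ ∃ a ∈ anchors, ∃ p : G.Walk x a,
      ∀ z ∈ p.support, z ∉ S}) := by
  classical
  set K := S ∪ {x | x ∉ S ∧ ∃ a ∈ anchors, ∃ p : G.Walk x a, ∀ z ∈ p.support, z ∉ S} with hK
  have aux : ∀ (u w : V),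
      (w ∉ S ∧ ∃ a ∈ anchors, ∃ q : G.Walk w a, ∀ z ∈ q.support, z ∉ S) →
      u ≠ w → ¬ G.Adj u w → ∀ p : G.Walk u w, p.IsPath →
      (∀ x ∈ p.support, x ≠ u → x ≠ w → x ∉ K) → False := by
    rintro u w ⟨hwS, a0, ha0, q, hq⟩ hne hnadj p hp hall
    cases p with
    | nil => exact hne rfl
    | @cons _ c _ h p' =>
      by_cases hcw : c = w
      · subst hcw; exact hnadj h
      have hcsup : c ∈ (Walk.cons h p').support := by
        rw [Walk.support_cons]
        exact List.mem_cons_of_mem _ p'.start_mem_support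
      have hpath := (Walk.cons_isPath_iff h p').1 hp
      have hcu : c ≠ u := fun he => hpath.2 (he ▸ p'.start_mem_support)
      have hcK := hall c hcsup hcu hcw
      have hp'S : ∀ z ∈ p'.support, z ∉ S := by
        intro z hz
        by_cases hzw : z = w
        · subst hzw; exact hwS
        · have hzu : z ≠ u := fun he => hpath.2 (he ▸ hz)
          have hzsup : z ∈ (Walk.cons h p').support := by
            rw [Walk.support_cons]; exact List.mem_cons_of_mem _ hz
          have := hall z hzsup hzu hzw
          rw [hK] at this
          exact fun hzS => this (Or.inl hzS)
      apply hcK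
      rw [hK]
      right
      refine ⟨hp'S c p'.start_mem_support, a0, ha0, p'.append q, ?_⟩
      intro z hz
      rcases walk_append_mem G p' q hz with h1 | h1
      · exact hp'S z h1
      · exact hq z h1
  intro u hu w hw hne hnadj p hp hall
  rw [hK] at hu hw
  rcases hw with hwS | hwR
  · rcases hu with huS | huR
    · exact hnadj (hS huS hwS hne)
    · refine aux w u huR hne.symm (fun hadj => hnadj hadj.symm) p.reverse hp.reverse ?_
      intro x hx hxw hxu
      rw [Walk.support_reverse, List.mem_reverse] at hx
      exact hall x hx hxu hxw
  · exact aux u w hwR hne hnadj p hp hall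

end AuxConvex

/-- Any separator contains a minimal separator. -/
lemma exists_minsep {W : Type*} [Finite W] (G' : SimpleGraph W) (a b : W) :
    ∀ (m : ℕ) (S : Set W), S.ncard ≤ m → SepSet G' a b S →
    ∃ S', S' ⊆ S ∧ MinSepSet G' a b S' := by
  intro m
  induction m with
  | zero =>
    intro S hcard hsep
    refine ⟨S, subset_rfl, hsep, ?_⟩
    intro S'' hss
    have hlt : S''.ncard < S.ncard := Set.ncard_lt_ncard hss (Set.toFinite S)
    exact fun _ => by omega
  | succ m ihm =>
    intro S hcard hsep
    by_cases hex : ∃ S'', S'' ⊂ S ∧ SepSet G' a b S''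
    · obtain ⟨S'', hss, hsep''⟩ := hex
      have hlt : S''.ncard < S.ncard := Set.ncard_lt_ncard hss (Set.toFinite S)
      obtain ⟨S', h1, h2⟩ := ihm S'' (by omega) hsep''
      exact ⟨S', h1.trans hss.subset, h2⟩
    · push_neg at hex
      exact ⟨S, subset_rfl, hsep, fun S'' hss hs => hex S'' hss hs⟩

/-- The set of vertices labeled at "time k": those with label at least `k`. -/
def lab {n : ℕ} (α : V ≃ Fin n) (k : ℕ) : Set V := {x | k ≤ (α x : ℕ)}

lemma mem_lab {n : ℕ} (α : V ≃ Fin n) (k : ℕ) (x : V) : x ∈ lab α k ↔ k ≤ (α x : ℕ) :=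
  Iff.rfl

/-- Key MCS lemma: if `v` is the last vertex of an MCS and `S` is a clique containing `v`,
then two neighbors of `v` outside `S` cannot be separated by `S`. -/
lemma mcs_key [Fintype V] {n : ℕ} (G : SimpleGraph V) (α : V ≃ Fin n) (hα : IsMCS G α)
    (v : V) (hv : ∀ w, α v ≤ α w) (S : Set V) (hS : G.IsClique S) (hvS : v ∈ S)
    (a b : V) (ha : G.Adj v a) (hb : G.Adj v b) (haS : a ∉ S) (hbS : b ∉ S)
    (hsep : ∀ p : G.Walk a b, ∃ x ∈ p.support, x ∈ S) : False := by
  classical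
  set Bad : ℕ → V → Prop := fun k x => x ∉ S ∧
    ((G.Adj v x ∧ x ∈ lab α k) ∨ (x ∉ lab α k ∧
      ((S \ {v}) ∩ lab α k).ncard < ({w | G.Adj x w} ∩ lab α k).ncard)) with hBad
  set Reach : V → V → Prop :=
    fun x y => ∃ p : G.Walk x y, ∀ z ∈ p.support, z ∉ S with hReach
  have npos : 0 < n := (α a).pos
  have hαv : (α v : ℕ) = 0 := by
    have := hv (α.symm ⟨0, npos⟩)
    rw [Equiv.apply_symm_apply] at this
    exact Nat.le_zero.1 this
  have reach_trans : ∀ {x y z}, Reach x y → Reach y z → Reach x z := by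
    rintro x y z ⟨p, hp⟩ ⟨q, hq⟩
    refine ⟨p.append q, fun w hw => ?_⟩
    rw [Walk.support_append] at hw
    rcases List.mem_append.1 hw with h | h
    · exact hp w h
    · exact hq w (List.mem_of_mem_tail h)
  have reach_symm : ∀ {x y}, Reach x y → Reach y x := by
    rintro x y ⟨p, hp⟩
    exact ⟨p.reverse, fun w hw => hp w (by rwa [Walk.support_reverse, List.mem_reverse] at hw)⟩
  have reach_refl : ∀ {x}, x ∉ S → Reach x x := fun {x} hx =>
    ⟨Walk.nil, by simpa using hx⟩
  have reach_adj : ∀ {x y}, G.Adj x y → x ∉ S → y ∉ S → Reach x y := by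
    intro x y hxy hx hy
    refine ⟨Walk.cons hxy Walk.nil, ?_⟩
    intro z hz
    simp only [Walk.support_cons, Walk.support_nil, List.mem_cons, List.mem_singleton] at hz
    rcases hz with rfl | rfl | h
    · exact hx
    · exact hy
    · exact absurd h (by simp)
  have Lmono : ∀ k : ℕ, lab α (k + 1) ⊆ lab α k := fun k x hx =>
    le_trans (Nat.le_succ k) hx
  have base : ∀ k, n ≤ k → ∀ x, ¬ Bad k x := by
    intro k hk x ⟨hxS, hx⟩
    have hLk : lab α k = (∅ : Set V) := by
      ext y
      simp only [mem_lab, Set.mem_empty_iff_false, iff_false, not_le]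
      exact lt_of_lt_of_le (α y).isLt hk
    rcases hx with ⟨_, hxL⟩ | ⟨_, hlt⟩
    · rw [hLk] at hxL; exact hxL
    · rw [hLk] at hlt
      simp only [Set.inter_empty, Set.ncard_empty] at hlt
      omega
  have step : ∀ k, 1 ≤ k → k < n →
      (∀ x y, Bad (k+1) x → Bad (k+1) y → Reach x y) →
      (∀ x y, Bad k x → Bad k y → Reach x y) := by
    intro k hk1 hkn IH
    obtain ⟨u, hαu⟩ : ∃ u : V, (α u : ℕ) = k := ⟨α.symm ⟨k, hkn⟩, by simp⟩
    have hLk : lab α k = insert u (lab α (k+1)) := by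
      ext x
      simp only [mem_lab, Set.mem_insert_iff]
      constructor
      · intro hx
        rcases Nat.eq_or_lt_of_le hx with heq | hlt
        · left
          exact α.injective (Fin.ext (by omega))
        · right; exact hlt
      · rintro (rfl | hx)
        · omega
        · omega
    have huL : u ∉ lab α (k+1) := by simp only [mem_lab]; omega
    have hvu : v ≠ u := by
      intro h
      rw [← h] at hαu
      omega
    have hset : ∀ w : V, {x | G.Adj w x ∧ α u < α x} = {x | G.Adj w x} ∩ lab α (k+1) := by
      intro w
      ext x
      simp only [Set.mem_setOf_eq, Set.mem_inter_iff, mem_lab, Fin.lt_iff_val_lt_val, hαu]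
      constructor <;> rintro ⟨h1, h2⟩ <;> exact ⟨h1, by omega⟩
    by_cases huS : u ∈ S
    · have hT : (S \ {v}) ∩ lab α k = insert u ((S \ {v}) ∩ lab α (k+1)) := by
        rw [hLk]
        ext x
        simp only [Set.mem_inter_iff, Set.mem_insert_iff, Set.mem_diff, Set.mem_singleton_iff]
        constructor
        · rintro ⟨⟨hxS, hxv⟩, rfl | hxL⟩
          · exact Or.inl rfl
          · exact Or.inr ⟨⟨hxS, hxv⟩, hxL⟩
        · rintro (rfl | ⟨⟨hxS, hxv⟩, hxL⟩)
          · exact ⟨⟨huS, Ne.symm hvu⟩, Or.inl rfl⟩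
          · exact ⟨⟨hxS, hxv⟩, Or.inr hxL⟩
      have htk : ((S \ {v}) ∩ lab α k).ncard = ((S \ {v}) ∩ lab α (k+1)).ncard + 1 := by
        rw [hT, Set.ncard_insert_of_notMem (fun h => huL h.2)]
      have promote : ∀ x, Bad k x → Bad (k+1) x := by
        rintro x ⟨hxS, hx⟩
        refine ⟨hxS, ?_⟩
        rcases hx with ⟨hadj, hxL⟩ | ⟨hxL, hlt⟩
        · left
          refine ⟨hadj, ?_⟩
          rw [hLk] at hxL
          rcases hxL with rfl | h
          · exact absurd huS hxS
          · exact h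
        · right
          refine ⟨fun h => hxL (Lmono k h), ?_⟩
          have hsub : {w | G.Adj x w} ∩ lab α k ⊆ insert u ({w | G.Adj x w} ∩ lab α (k+1)) := by
            rw [hLk]
            rintro z ⟨hz1, rfl | hz2⟩
            · exact Set.mem_insert _ _
            · exact Set.mem_insert_of_mem _ ⟨hz1, hz2⟩
          have hfle : ({w | G.Adj x w} ∩ lab α k).ncard ≤
              ({w | G.Adj x w} ∩ lab α (k+1)).ncard + 1 :=
            le_trans (Set.ncard_le_ncard hsub (Set.toFinite _)) (Set.ncard_insert_le _ _)
          omega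
      exact fun x y hx hy => IH x y (promote x hx) (promote y hy)
    · have htk : ((S \ {v}) ∩ lab α k).ncard = ((S \ {v}) ∩ lab α (k+1)).ncard := by
        have hEq : (S \ {v}) ∩ lab α k = (S \ {v}) ∩ lab α (k+1) := by
          rw [hLk]
          ext x
          simp only [Set.mem_inter_iff, Set.mem_insert_iff, Set.mem_diff, Set.mem_singleton_iff]
          constructor
          · rintro ⟨⟨hxS, hxv⟩, rfl | hxL⟩
            · exact absurd hxS huS
            · exact ⟨⟨hxS, hxv⟩, hxL⟩
          · rintro ⟨⟨hxS, hxv⟩, hxL⟩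
            exact ⟨⟨hxS, hxv⟩, Or.inr hxL⟩
        rw [hEq]
      have claim1 : ∀ x, Bad k x → Reach x u ∨ Bad (k+1) x := by
        rintro x ⟨hxS, hx⟩
        rcases hx with ⟨hadj, hxL⟩ | ⟨hxL, hlt⟩
        · rw [hLk] at hxL
          rcases hxL with rfl | h
          · exact Or.inl (reach_refl hxS)
          · exact Or.inr ⟨hxS, Or.inl ⟨hadj, h⟩⟩
        · by_cases hadjxu : G.Adj x u
          · exact Or.inl (reach_adj hadjxu hxS huS)
          · right
            refine ⟨hxS, Or.inr ⟨fun h => hxL (Lmono k h), ?_⟩⟩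
            have hEq : {w | G.Adj x w} ∩ lab α k = {w | G.Adj x w} ∩ lab α (k+1) := by
              rw [hLk]
              ext z
              simp only [Set.mem_inter_iff, Set.mem_insert_iff, Set.mem_setOf_eq]
              constructor
              · rintro ⟨hz1, rfl | hz2⟩
                · exact absurd hz1 hadjxu
                · exact ⟨hz1, hz2⟩
              · rintro ⟨hz1, hz2⟩
                exact ⟨hz1, Or.inr hz2⟩
            rw [← hEq, ← htk]
            exact hlt
      have claim2 : ∀ z, Bad (k+1) z → Bad (k+1) u := by
        rintro z ⟨hzS, hz⟩
        refine ⟨huS, Or.inr ⟨huL, ?_⟩⟩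
        rcases hz with ⟨hadj, hzL⟩ | ⟨hzL, hlt⟩
        · have hsub : insert z ((S \ {v}) ∩ lab α (k+1)) ⊆ {w | G.Adj v w} ∩ lab α (k+1) := by
            rintro w (rfl | ⟨⟨hwS, hwv⟩, hwL⟩)
            · exact ⟨hadj, hzL⟩
            · exact ⟨hS hvS hwS (Ne.symm hwv), hwL⟩
          have h1 : ((S \ {v}) ∩ lab α (k+1)).ncard + 1 ≤
              ({w | G.Adj v w} ∩ lab α (k+1)).ncard := by
            rw [← Set.ncard_insert_of_notMem (fun h => hzS h.1.1)]
            exact Set.ncard_le_ncard hsub (Set.toFinite _)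
          have h2 := hα u v (hv u)
          rw [hset u, hset v] at h2
          omega
        · by_cases hzu : z = u
          · subst hzu
            exact hlt
          · have hle : α z ≤ α u := by
              rw [Fin.le_iff_val_le_val, hαu]
              simp only [mem_lab, not_le] at hzL
              omega
            have h2 := hα u z hle
            rw [hset u, hset z] at h2
            omega
      intro x y hx hy
      rcases claim1 x hx with hxu | hx' <;> rcases claim1 y hy with hyu | hy'
      · exact reach_trans hxu (reach_symm hyu)
      · exact reach_trans hxu (IH u y (claim2 y hy') hy')
      · exact reach_trans (IH x u hx' (claim2 x hx')) (reach_symm hyu)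
      · exact IH x y hx' hy'
  have main : ∀ d k, 1 ≤ k → n ≤ k + d → ∀ x y, Bad k x → Bad k y → Reach x y := by
    intro d
    induction d with
    | zero =>
      intro k hk hkd x y hx _
      exact absurd hx (base k (by omega) x)
    | succ d ihd =>
      intro k hk hkd
      rcases le_or_gt n k with hn | hn
      · intro x y hx _
        exact absurd hx (base k hn x)
      · exact step k hk hn (ihd (k+1) (by omega) (by omega))
  have lab1 : ∀ c : V, G.Adj v c → c ∈ lab α 1 := by
    intro c hc
    simp only [mem_lab]
    by_contra h
    have : c = v := α.injective (Fin.ext (by omega))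
    exact G.irrefl (this ▸ hc)
  have hBada : Bad 1 a := ⟨haS, Or.inl ⟨ha, lab1 a ha⟩⟩
  have hBadb : Bad 1 b := ⟨hbS, Or.inl ⟨hb, lab1 b hb⟩⟩
  obtain ⟨p, hp⟩ := main n 1 le_rfl (by omega) a b hBada hBadb
  obtain ⟨x, hx1, hx2⟩ := hsep p
  exact hp x hx1 hx2

theorem convex_hull_of_min_MCS_vertex_is_atom [Fintype V] {n : ℕ}
    (G : SimpleGraph V) (hG : G.Connected)
    (α : V ≃ Fin n) (hα : IsMCS G α) (v : V) (hv : ∀ w, α v ≤ α w)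
    (H : Set V) (hconv : ConvexSet G H) (hsub : insert v (G.neighborSet v) ⊆ H)
    (hmin : ∀ H', ConvexSet G H' → insert v (G.neighborSet v) ⊆ H' → H ⊆ H') :
    GraphAtom G H := by
  classical
  have hvH : v ∈ H := hsub (Set.mem_insert _ _)
  have hnbr : ∀ y, G.Adj v y → y ∈ H := fun y h => hsub (Set.mem_insert_of_mem _ h)
  -- from a walk avoiding S between vertices of H, extract one staying in H
  have hHwalk : ∀ a b : V, a ∈ H → b ∈ H → ∀ S : Set V,
      (∃ p : G.Walk a b, ∀ z ∈ p.support, z ∉ S) →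
      ∃ q : G.Walk a b, (∀ z ∈ q.support, z ∈ H) ∧ (∀ z ∈ q.support, z ∉ S) := by
    rintro a b haH hbH S ⟨p, hpS⟩
    exact convex_extract hconv p.bypass.length p.bypass le_rfl p.bypass_isPath haH hbH S
      (fun z hz => hpS z (p.support_bypass_subset hz))
  -- Part 1: connectivity
  have hconn : (G.induce H).Connected := by
    rw [connected_iff]
    refine ⟨?_, ⟨⟨v, hvH⟩⟩⟩
    rintro ⟨x, hx⟩ ⟨y, hy⟩
    obtain ⟨p⟩ := hG.preconnected x y
    obtain ⟨q, hqH, -⟩ := hHwalk x y hx hy ∅ ⟨p, by simp⟩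
    obtain ⟨pq, -⟩ := lift_walk G q hqH hx hy
    exact ⟨pq⟩
  -- Part 2: no clique minimal separator inside H
  have hnosep : ¬ ∃ S : Set H, CliqueMinSep (G.induce H) S := by
    rintro ⟨St, hclt, ⟨u, huH⟩, ⟨w, hwH⟩, ⟨⟨hubS, hwbS, hsepb⟩, -⟩⟩
    set S : Set V := Subtype.val '' St with hSdef
    have hcl : G.IsClique S := by
      rw [isClique_iff]
      rintro _ ⟨x, hxS, rfl⟩ _ ⟨y, hyS, rfl⟩ hxy
      have hne : x ≠ y := fun h => hxy (by rw [h])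
      have := hclt hxS hyS hne
      simpa using this
    have huS : u ∉ S := by
      rintro ⟨x, hxS, hxe⟩
      have : x = ⟨u, huH⟩ := Subtype.ext hxe
      rw [this] at hxS
      exact hubS hxS
    have hwS : w ∉ S := by
      rintro ⟨x, hxS, hxe⟩
      have : x = ⟨w, hwH⟩ := Subtype.ext hxe
      rw [this] at hxS
      exact hwbS hxS
    -- S separates u and w in G
    have hsepG : ∀ p : G.Walk u w, ∃ x ∈ p.support, x ∈ S := by
      intro p
      by_contra hcon
      push_neg at hcon
      obtain ⟨q, hqH, hqS⟩ := hHwalk u w huH hwH S ⟨p, hcon⟩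
      obtain ⟨pq, hpq⟩ := lift_walk G q hqH huH hwH
      obtain ⟨xx, hxx1, hxx2⟩ := hsepb pq
      exact hqS _ (hpq xx hxx1) ⟨xx, hxx2, rfl⟩
    by_cases hvSm : v ∈ S
    · -- v belongs to the separator: use the MCS property
      set anchors : Set V := {c | G.Adj v c ∧ c ∉ S} with hanch
      have hKsub : insert v (G.neighborSet v) ⊆
          S ∪ {x | x ∉ S ∧ ∃ a ∈ anchors, ∃ p : G.Walk x a, ∀ z ∈ p.support, z ∉ S} := by
        intro y hy0
        rcases Set.mem_insert_iff.1 hy0 with h | hy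
        · exact Set.mem_of_eq_of_mem h (Or.inl hvSm)
        · have hadj : G.Adj v y := hy
          by_cases hyS : y ∈ S
          · exact Or.inl hyS
          · exact Or.inr ⟨hyS, y, ⟨hadj, hyS⟩, Walk.nil, by simpa using hyS⟩
      have hHK := hmin _ (clique_reach_convex hcl anchors) hKsub
      rcases hHK huH with h | ⟨-, au, hau, qu, hqu⟩
      · exact huS h
      rcases hHK hwH with h | ⟨-, aw, haw, qw, hqw⟩
      · exact hwS h
      obtain ⟨hau1, hau2⟩ := hau
      obtain ⟨haw1, haw2⟩ := haw
      by_cases hr : ∀ rr : G.Walk au aw, ∃ z ∈ rr.support, z ∈ S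
      · exact mcs_key G α hα v hv S hcl hvSm au aw hau1 haw1 hau2 haw2 hr
      · push_neg at hr
        obtain ⟨r, hrS⟩ := hr
        obtain ⟨x, hx1, hx2⟩ := hsepG ((qu.append r).append qw.reverse)
        rcases walk_append_mem G (qu.append r) qw.reverse hx1 with h1 | h1
        · rcases walk_append_mem G qu r h1 with h2 | h2
          · exact hqu x h2 hx2
          · exact hrS x h2 hx2
        · rw [Walk.support_reverse, List.mem_reverse] at h1
          exact hqw x h1 hx2
    · -- v is not in the separator: everything in H reaches v avoiding S
      set anchors : Set V := {v} with hanch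
      have hKsub : insert v (G.neighborSet v) ⊆
          S ∪ {x | x ∉ S ∧ ∃ a ∈ anchors, ∃ p : G.Walk x a, ∀ z ∈ p.support, z ∉ S} := by
        intro y hy0
        rcases Set.mem_insert_iff.1 hy0 with h | hy
        · exact Set.mem_of_eq_of_mem h
            (Or.inr ⟨hvSm, v, rfl, Walk.nil, by simpa using hvSm⟩)
        · have hadj : G.Adj v y := hy
          by_cases hyS : y ∈ S
          · exact Or.inl hyS
          · refine Or.inr ⟨hyS, v, rfl, Walk.cons hadj.symm Walk.nil, ?_⟩
            intro z hz
            simp only [Walk.support_cons, Walk.support_nil, List.mem_cons,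
              List.mem_singleton] at hz
            rcases hz with rfl | rfl | hz
            · exact hyS
            · exact hvSm
            · exact absurd hz (by simp)
      have hHK := hmin _ (clique_reach_convex hcl anchors) hKsub
      rcases hHK huH with h | ⟨-, au, hau, qu, hqu⟩
      · exact huS h
      rcases hHK hwH with h | ⟨-, aw, haw, qw, hqw⟩
      · exact hwS h
      have hau' : au = v := hau
      have haw' : aw = v := haw
      subst hau'
      subst haw'
      obtain ⟨x, hx1, hx2⟩ := hsepG (qu.append qw.reverse)
      rcases walk_append_mem G qu qw.reverse hx1 with h1 | h1
      · exact hqu x h1 hx2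
      · rw [Walk.support_reverse, List.mem_reverse] at h1
        exact hqw x h1 hx2
  -- Part 3: maximality
  refine ⟨hconn, hnosep, ?_⟩
  intro H' hHH' _ hno
  refine Set.Subset.antisymm ?_ hHH'
  intro z hzH'
  by_contra hzH
  -- the "component" of z outside H within H'
  set C : Set V := {y | ∃ p : G.Walk z y, ∀ x ∈ p.support, x ∈ H' ∧ x ∉ H} with hC
  have hzC : z ∈ C := ⟨Walk.nil, by simp [hzH', hzH]⟩
  have hCnotH : ∀ c ∈ C, c ∉ H := by
    rintro c ⟨p, hp⟩
    exact (hp c p.end_mem_support).2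
  set S0 : Set V := {h | h ∈ H ∧ ∃ c ∈ C, G.Adj h c} with hS0
  have hS0clique : ∀ a ∈ S0, ∀ b ∈ S0, a ≠ b → G.Adj a b := by
    rintro a ⟨haH, ca, hcaC, hca⟩ b ⟨hbH, cb, hcbC, hcb⟩ hab
    by_contra hnadj
    obtain ⟨pa, hpa⟩ := hcaC
    obtain ⟨pb, hpb⟩ := hcbC
    set m : G.Walk ca cb := pa.reverse.append pb with hm
    set full : G.Walk a b :=
      Walk.cons hca (m.append (Walk.cons hcb.symm Walk.nil)) with hfull
    have hfullint : ∀ x ∈ full.support, x ≠ a → x ≠ b → x ∉ H := by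
      intro x hx hxa hxb
      rw [hfull, Walk.support_cons] at hx
      rcases List.mem_cons.1 hx with rfl | hx
      · exact absurd rfl hxa
      rcases walk_append_mem G m (Walk.cons hcb.symm Walk.nil) hx with h1 | h1
      · rw [hm] at h1
        rcases walk_append_mem G pa.reverse pb h1 with h2 | h2
        · rw [Walk.support_reverse, List.mem_reverse] at h2
          exact (hpa x h2).2
        · exact (hpb x h2).2
      · simp only [Walk.support_cons, Walk.support_nil, List.mem_cons,
          List.mem_singleton] at h1
        rcases h1 with rfl | rfl | h1
        · exact hCnotH _ ⟨pb, hpb⟩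
        · exact absurd rfl hxb
        · exact absurd h1 (by simp)
    have := hconv a haH b hbH hab hnadj full.bypass full.bypass_isPath
    apply this
    intro x hx hxa hxb
    exact hfullint x (full.support_bypass_subset hx) hxa hxb
  have hvH' : v ∈ H' := hHH' hvH
  have hvS0 : v ∉ S0 := by
    rintro ⟨-, c, hcC, hvc⟩
    exact hCnotH c hcC (hnbr c hvc)
  have hzS0 : z ∉ S0 := fun h => hzH h.1
  set St : Set ↥H' := {x | (x : V) ∈ S0} with hSt
  have hsepSt : SepSet (G.induce H') ⟨z, hzH'⟩ ⟨v, hvH'⟩ St := by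
    refine ⟨hzS0, hvS0, ?_⟩
    intro p
    obtain ⟨q, hq1, hq2⟩ := proj_walk G p
    have FH : ∀ (c y : V) (r : G.Walk c y), (∀ x ∈ r.support, x ∈ H') → c ∈ C → y ∈ H →
        ∃ x ∈ r.support, x ∈ S0 := by
      intro c0 y0 r
      induction r with
      | nil =>
        intro _ hcC hcH
        exact absurd hcH (hCnotH _ hcC)
      | cons hcd r ih =>
        rename_i c1 d1 y1
        intro hr hcC hyH
        by_cases hdH : d1 ∈ H
        · refine ⟨d1, ?_, ⟨hdH, c1, hcC, hcd.symm⟩⟩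
          rw [Walk.support_cons]
          exact List.mem_cons_of_mem _ r.start_mem_support
        · have hdC : d1 ∈ C := by
            obtain ⟨pz, hpz⟩ := hcC
            refine ⟨pz.append (Walk.cons hcd Walk.nil), ?_⟩
            intro x hx
            rcases walk_append_mem G pz (Walk.cons hcd Walk.nil) hx with h1 | h1
            · exact hpz x h1
            · simp only [Walk.support_cons, Walk.support_nil, List.mem_cons,
                List.mem_singleton] at h1
              rcases h1 with rfl | rfl | h1
              · exact hpz x pz.end_mem_support
              · refine ⟨hr x ?_, hdH⟩
                rw [Walk.support_cons]
                exact List.mem_cons_of_mem _ r.start_mem_support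
              · exact absurd h1 (by simp)
          obtain ⟨x, hx1, hx2⟩ := ih
            (fun x hx => hr x (by rw [Walk.support_cons]; exact List.mem_cons_of_mem _ hx))
            hdC hyH
          refine ⟨x, ?_, hx2⟩
          rw [Walk.support_cons]
          exact List.mem_cons_of_mem _ hx1
    obtain ⟨x, hx1, hx2⟩ := FH z v q hq1 hzC hvH
    obtain ⟨xb, hxb1, hxb2⟩ := hq2 x hx1
    refine ⟨xb, hxb1, ?_⟩
    rw [hSt]
    simp only [Set.mem_setOf_eq]
    rw [hxb2]
    exact hx2
  obtain ⟨S', hS'sub, hS'min⟩ :=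
    exists_minsep (G.induce H') ⟨z, hzH'⟩ ⟨v, hvH'⟩ St.ncard St le_rfl hsepSt
  apply hno
  refine ⟨S', ?_, ⟨z, hzH'⟩, ⟨v, hvH'⟩, hS'min⟩
  rw [isClique_iff]
  intro x hx y hy hxy
  have hxS0 : (x : V) ∈ S0 := hS'sub hx
  have hyS0 : (y : V) ∈ S0 := hS'sub hy
  have hne : (x : V) ≠ (y : V) := fun h => hxy (Subtype.ext h)
  have := hS0clique _ hxS0 _ hyS0 hne
  simpa using this
end

section
/- If G_H is an atom of a connected graph G with H ≠ V, and M is a connected component of the induced subgraph on V \ H, then N_G(M) is a clique minimal separator of G. -/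
open SimpleGraph

variable {V : Type*}

namespace AtomCMS

variable {V : Type*} {G : SimpleGraph V}

/-- `u` and `v` are joined by a walk all of whose vertices lie in `A`. -/
def WkIn (G : SimpleGraph V) (A : Set V) (u v : V) : Prop :=
  ∃ p : G.Walk u v, ∀ x ∈ p.support, x ∈ A

lemma WkIn.mono {A B : Set V} (h : A ⊆ B) {u v : V} : WkIn G A u v → WkIn G B u v :=
  fun ⟨p, hp⟩ => ⟨p, fun x hx => h (hp x hx)⟩

lemma WkIn.refl {A : Set V} {u : V} (hu : u ∈ A) : WkIn G A u u :=
  ⟨.nil, by intro x hx; rw [Walk.support_nil] at hx; simp at hx; simpa [hx]⟩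

lemma WkIn.symm {A : Set V} {u v : V} (h : WkIn G A u v) : WkIn G A v u := by
  obtain ⟨p, hp⟩ := h
  refine ⟨p.reverse, fun x hx => ?_⟩
  rw [Walk.support_reverse] at hx
  exact hp x (List.mem_reverse.mp hx)

lemma WkIn.trans {A : Set V} {u v w : V} (h : WkIn G A u v) (h' : WkIn G A v w) :
    WkIn G A u w := by
  obtain ⟨p, hp⟩ := h; obtain ⟨q, hq⟩ := h'
  refine ⟨p.append q, fun x hx => ?_⟩
  rcases (Walk.mem_support_append_iff _ _).mp hx with h1 | h1
  exacts [hp x h1, hq x h1]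

lemma WkIn.memLeft {A : Set V} {u v : V} (h : WkIn G A u v) : u ∈ A :=
  h.choose_spec u (Walk.start_mem_support _)

lemma WkIn.memRight {A : Set V} {u v : V} (h : WkIn G A u v) : v ∈ A :=
  h.choose_spec v (Walk.end_mem_support _)

lemma WkIn.adj {A : Set V} {u v : V} (h : G.Adj u v) (hu : u ∈ A) (hv : v ∈ A) :
    WkIn G A u v := by
  refine ⟨.cons h .nil, fun x hx => ?_⟩
  rw [Walk.support_cons, Walk.support_nil] at hx
  simp at hx
  rcases hx with rfl | rfl <;> assumption

/-- Project a walk in an induced subgraph to the ambient graph. -/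
lemma walk_down {A : Set V} {a b : A} (q : (G.induce A).Walk a b) :
    ∃ p : G.Walk a.1 b.1, p.support = q.support.map Subtype.val := by
  induction q with
  | nil => exact ⟨.nil, by simp⟩
  | cons h q ih =>
    obtain ⟨p, hp⟩ := ih
    exact ⟨.cons (by exact_mod_cast h) p, by simp [hp]⟩

/-- Lift a walk contained in `A` to the induced subgraph on `A`. -/
lemma walk_up {A : Set V} : ∀ {u v : V} (p : G.Walk u v), (∀ x ∈ p.support, x ∈ A) →
    ∀ (hu : u ∈ A) (hv : v ∈ A),
    ∃ q : (G.induce A).Walk ⟨u,hu⟩ ⟨v,hv⟩, q.support.map Subtype.val = p.support := by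
  intro u v p
  induction p with
  | nil => intro _ hu hv; exact ⟨.nil, by simp⟩
  | cons h p ih =>
    intro hs hu hv
    rename_i a b w
    have hw : b ∈ A := hs b (by simp [SimpleGraph.Walk.start_mem_support])
    obtain ⟨q, hq⟩ := ih (fun x hx => hs x (by simp [hx])) hw hv
    exact ⟨.cons (by simpa using h) q, by simp [hq]⟩

lemma wkIn_of_connected {A : Set V} (h : (G.induce A).Connected) {u v : V}
    (hu : u ∈ A) (hv : v ∈ A) : WkIn G A u v := by
  obtain ⟨q⟩ := h.preconnected ⟨u, hu⟩ ⟨v, hv⟩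
  obtain ⟨p, hp⟩ := walk_down q
  refine ⟨p, fun x hx => ?_⟩
  rw [hp] at hx
  obtain ⟨y, _, rfl⟩ := List.mem_map.mp hx
  exact y.2

lemma connected_of_wkIn {A : Set V} (hne : A.Nonempty)
    (h : ∀ u ∈ A, ∀ v ∈ A, WkIn G A u v) : (G.induce A).Connected := by
  have : Nonempty A := ⟨⟨hne.choose, hne.choose_spec⟩⟩
  refine ⟨fun a b => ?_⟩
  obtain ⟨p, hp⟩ := h a.1 a.2 b.1 b.2
  obtain ⟨q, _⟩ := walk_up p hp a.2 b.2
  exact ⟨q⟩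

lemma isClique_image {A : Set V} {Q : Set A} (h : (G.induce A).IsClique Q) :
    G.IsClique (Subtype.val '' Q) := by
  rintro x ⟨x', hx', rfl⟩ y ⟨y', hy', rfl⟩ hxy
  have : x' ≠ y' := fun hc => hxy (by rw [hc])
  exact_mod_cast h hx' hy' this

lemma isClique_preimage {A : Set V} {R : Set V} (h : G.IsClique R) :
    (G.induce A).IsClique {x : A | ↑x ∈ R} := by
  intro x hx y hy hxy
  have : (x : V) ≠ (y : V) := fun hc => hxy (Subtype.ext hc)
  exact_mod_cast h hx hy this


/-- `S` separates `u` from `v` among walks staying inside `A`. -/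
def SepIn (G : SimpleGraph V) (A : Set V) (u v : V) (S : Set V) : Prop :=
  u ∉ S ∧ v ∉ S ∧ ∀ p : G.Walk u v, (∀ x ∈ p.support, x ∈ A) → ∃ x ∈ p.support, x ∈ S

lemma exists_min_sepIn_aux (A : Set V) (u v : V) [Fintype V] :
    ∀ (n : ℕ) (S₀ : Set V), S₀.ncard ≤ n → SepIn G A u v S₀ →
    ∃ S, S ⊆ S₀ ∧ SepIn G A u v S ∧ ∀ S' ⊂ S, ¬ SepIn G A u v S' := by
  intro n
  induction n with
  | zero =>
    intro S₀ hc hsep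
    refine ⟨S₀, le_refl _, hsep, fun S' hS' hsep' => ?_⟩
    have h0 : S₀ = ∅ := (Set.ncard_eq_zero (Set.toFinite S₀)).mp (Nat.le_zero.mp hc)
    rw [h0] at hS'
    exact hS'.2 (Set.empty_subset S')
  | succ n ih =>
    intro S₀ hc hsep
    by_cases hex : ∃ S' ⊂ S₀, SepIn G A u v S'
    · obtain ⟨S', hS', hsep'⟩ := hex
      have hlt : S'.ncard < S₀.ncard := Set.ncard_lt_ncard hS' (Set.toFinite S₀)
      obtain ⟨S, h1, h2, h3⟩ := ih S' (by omega) hsep'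
      exact ⟨S, h1.trans hS'.subset, h2, h3⟩
    · push_neg at hex
      exact ⟨S₀, le_refl _, hsep, hex⟩

lemma exists_min_sepIn [Fintype V] {A : Set V} {u v : V} {S₀ : Set V}
    (h : SepIn G A u v S₀) :
    ∃ S, S ⊆ S₀ ∧ SepIn G A u v S ∧ ∀ S' ⊂ S, ¬ SepIn G A u v S' :=
  exists_min_sepIn_aux A u v S₀.ncard S₀ le_rfl h

/-- From a clique minimal separator of the induced graph on `A`, extract ambient data. -/
lemma cms_down {A : Set V} (h : ∃ Q : Set A, CliqueMinSep (G.induce A) Q) :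
    ∃ R, R ⊆ A ∧ G.IsClique R ∧
      ∃ a b, a ∈ A ∧ b ∈ A ∧ SepIn G A a b R := by
  obtain ⟨Q, hQcl, u, v, ⟨⟨huQ, hvQ, hsep⟩, -⟩⟩ := h
  refine ⟨Subtype.val '' Q, by rintro x ⟨y, -, rfl⟩; exact y.2, isClique_image hQcl,
    u, v, u.2, v.2, ?_, ?_, ?_⟩
  · rintro ⟨y, hy, hyu⟩; exact huQ (by rwa [show y = u from Subtype.ext hyu] at hy)
  · rintro ⟨y, hy, hyv⟩; exact hvQ (by rwa [show y = v from Subtype.ext hyv] at hy)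
  · intro p hp
    obtain ⟨q, hq⟩ := walk_up p hp u.2 v.2
    obtain ⟨x, hx, hxQ⟩ := hsep (q.copy (by simp) (by simp))
    rw [Walk.support_copy] at hx
    exact ⟨x, by rw [← hq]; exact List.mem_map.mpr ⟨x, hx, rfl⟩, ⟨x, hxQ, rfl⟩⟩

/-- From an ambient minimal separator within `A`, build a clique minimal separator
of the induced graph on `A`. -/
lemma cms_up [Fintype V] {A R : Set V} (hRA : R ⊆ A) (hcl : G.IsClique R) {a b : V}
    (ha : a ∈ A) (hb : b ∈ A) (hsep : SepIn G A a b R)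
    (hmin : ∀ R' ⊂ R, ¬ SepIn G A a b R') :
    ∃ Q : Set A, CliqueMinSep (G.induce A) Q := by
  refine ⟨{x : A | ↑x ∈ R}, isClique_preimage hcl, ⟨a, ha⟩, ⟨b, hb⟩, ⟨?_, ?_, ?_⟩, ?_⟩
  · exact fun hc => hsep.1 hc
  · exact fun hc => hsep.2.1 hc
  · intro q
    obtain ⟨p, hp⟩ := walk_down q
    obtain ⟨x, hx, hxR⟩ := hsep.2.2 p (by
      intro x hx; rw [hp] at hx; obtain ⟨y, -, rfl⟩ := List.mem_map.mp hx; exact y.2)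
    rw [hp] at hx
    obtain ⟨y, hy, rfl⟩ := List.mem_map.mp hx
    exact ⟨y, hy, hxR⟩
  · intro Q' hQ' hsep'
    have hsub : Subtype.val '' Q' ⊆ R := by rintro x ⟨y, hy, rfl⟩; exact hQ'.subset hy
    have hproper : Subtype.val '' Q' ⊂ R := by
      refine ⟨hsub, fun hc => ?_⟩
      obtain ⟨z, hzQ, hzQ'⟩ := Set.exists_of_ssubset hQ'
      obtain ⟨y, hy, hyz⟩ := hc hzQ
      exact hzQ' (by rwa [show y = z from Subtype.ext hyz] at hy)
    refine hmin _ hproper ⟨?_, ?_, ?_⟩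
    · rintro ⟨y, hy, hyx⟩
      exact hsep'.1 ((show y = ⟨a, ha⟩ from Subtype.ext hyx) ▸ hy)
    · rintro ⟨y, hy, hyx⟩
      exact hsep'.2.1 ((show y = ⟨b, hb⟩ from Subtype.ext hyx) ▸ hy)
    · intro p hp
      obtain ⟨q, hq⟩ := walk_up p hp ha hb
      obtain ⟨x, hx, hxQ'⟩ := hsep'.2.2 q
      exact ⟨↑x, by rw [← hq]; exact List.mem_map.mpr ⟨x, hx, rfl⟩, ⟨x, hxQ', rfl⟩⟩


lemma escape {B F R : Set V} (hbd : ∀ w ∈ B, ∀ f ∈ F, G.Adj w f → w ∈ R)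
    (hFB : ∀ f ∈ F, f ∉ B) :
    ∀ {w t : V} (q : G.Walk w t), w ∈ F → t ∈ B → (∀ x ∈ q.support, x ∈ B ∪ F) →
    ∃ y, y ∈ R ∧ y ∈ B ∧
      ∃ q' : G.Walk y t, q'.length < q.length ∧ ∀ x ∈ q'.support, x ∈ B ∪ F := by
  intro w t q
  induction q with
  | nil => intro hw ht _; exact absurd ht (hFB _ hw)
  | cons h q ih =>
    rename_i c d e
    intro hw ht hs
    by_cases hd : d ∈ B
    · exact ⟨d, hbd d hd c hw h.symm, hd, q, by simp [Walk.length_cons],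
        fun x hx => hs x (by simp [hx])⟩
    · have hdF : d ∈ F := by
        rcases hs d (by simp [Walk.start_mem_support]) with h1 | h1
        · exact absurd h1 hd
        · exact h1
      obtain ⟨y, h1, h2, q', h3, h4⟩ := ih hdF ht (fun x hx => hs x (by simp [hx]))
      exact ⟨y, h1, h2, q', by simp only [Walk.length_cons]; omega, h4⟩

lemma surgery {B F R : Set V} (hRB : R ⊆ B) (hcl : G.IsClique R)
    (hFB : ∀ f ∈ F, f ∉ B) (hbd : ∀ w ∈ B, ∀ f ∈ F, G.Adj w f → w ∈ R) :
    ∀ (n : ℕ) {z t : V} (p : G.Walk z t), p.length ≤ n →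
      (∀ x ∈ p.support, x ∈ B ∪ F) → z ∈ B → t ∈ B → WkIn G B z t := by
  intro n
  induction n with
  | zero =>
    intro z t p hl _ hz _
    cases p with
    | nil => exact WkIn.refl hz
    | cons h q => simp [Walk.length_cons] at hl
  | succ n ih =>
    intro z t p hl hs hz ht
    cases p with
    | nil => exact WkIn.refl hz
    | cons h q =>
      rename_i d
      by_cases hd : d ∈ B
      · have hrec := ih q (by simp only [Walk.length_cons] at hl; omega)
          (fun x hx => hs x (by simp [hx])) hd ht
        exact (WkIn.adj h hz hd).trans hrec
      · have hdF : d ∈ F := by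
          rcases hs d (by simp [Walk.start_mem_support]) with h1 | h1
          · exact absurd h1 hd
          · exact h1
        have hzR : z ∈ R := hbd z hz d hdF h
        obtain ⟨y, hyR, hyB, q', hlen, hsup⟩ :=
          escape hbd hFB q hdF ht (fun x hx => hs x (by simp [hx]))
        have hq' := ih q' (by simp only [Walk.length_cons] at hl; omega) hsup hyB ht
        by_cases hzy : z = y
        · exact hzy ▸ hq'
        · exact (WkIn.adj (hcl hzR hyR hzy) hz hyB).trans hq'


lemma master [Fintype V] (G : SimpleGraph V) (H M : Set V)
    (hH : GraphAtom G H) (hM : CompOf G Hᶜ M)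
    (A : Set V) (hA : A.Nonempty) (hAH : A ⊆ H) (hAN : A ⊆ Nbhd G M) :
    ∃ R : Set V, G.IsClique R ∧ A ⊆ R ∧ (H \ R).Nonempty := by
  classical
  set Fam : Set (Set V) :=
    {X | X ⊆ M ∧ X.Nonempty ∧ (∀ z ∈ X, ∀ t ∈ X, WkIn G X z t) ∧
      ∀ α ∈ A, ∃ x ∈ X, G.Adj α x} with hFamdef
  have hMFam : M ∈ Fam := by
    refine ⟨le_refl _, hM.1, fun z hz t ht => wkIn_of_connected hM.2.2.1 hz ht, ?_⟩
    intro α hα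
    obtain ⟨-, x, hxM, hadj⟩ := hAN hα
    exact ⟨x, hxM, hadj⟩
  have hns : (Set.ncard '' Fam).Nonempty := ⟨M.ncard, M, hMFam, rfl⟩
  obtain ⟨X, hXFam, hXcard⟩ := Nat.sInf_mem hns
  have hXmin : ∀ X' ∈ Fam, ¬ X' ⊂ X := by
    intro X' h' hss
    have h1 : X'.ncard < X.ncard := Set.ncard_lt_ncard hss (Set.toFinite X)
    have h2 : sInf (Set.ncard '' Fam) ≤ X'.ncard := Nat.sInf_le ⟨X', h', rfl⟩
    omega
  obtain ⟨hXM, hXne, hXconn, hXA⟩ := hXFam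
  obtain ⟨α₀, hα₀⟩ := hA
  obtain ⟨x₀, hx₀X, hadj₀⟩ := hXA α₀ hα₀
  set A' := H ∪ X with hA'def
  have hHA' : H ⊆ A' := Set.subset_union_left
  have hXA' : X ⊆ A' := Set.subset_union_right
  have hto : ∀ z ∈ A', WkIn G A' z α₀ := by
    intro z hz
    rcases hz with hzH | hzX
    · exact (wkIn_of_connected hH.1 hzH (hAH hα₀)).mono hHA'
    · exact ((hXconn z hzX x₀ hx₀X).mono hXA').trans
        (WkIn.adj hadj₀.symm (hXA' hx₀X) (hHA' (hAH hα₀)))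
  have hA'conn : (G.induce A').Connected :=
    connected_of_wkIn ⟨α₀, hHA' (hAH hα₀)⟩
      (fun z hz t ht => (hto z hz).trans (hto t ht).symm)
  have hA'ne : A' ≠ H := by
    intro hc
    exact (hM.2.1 (hXM hx₀X)) (hc ▸ hXA' hx₀X)
  have hcms : ∃ Q : Set A', CliqueMinSep (G.induce A') Q := by
    by_contra hno
    exact hA'ne (hH.2.2 A' hHA' hA'conn hno)
  obtain ⟨R, hRA', hRcl, a, b, haA', hbA', hsep⟩ := cms_down hcms
  set Fl : V → V → Prop := fun c z => WkIn G (A' \ R) c z with hFldef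
  have hFsub : ∀ c z, Fl c z → z ∈ A' \ R := fun _ _ h => h.memRight
  have hdisj : ∀ z, Fl a z → Fl b z → False := by
    intro z h1 h2
    obtain ⟨p, hp⟩ := h1.trans h2.symm
    obtain ⟨x, hx, hxR⟩ := hsep.2.2 p (fun x hx' => (hp x hx').1)
    exact (hp x hx).2 hxR
  have honeH : ∀ h₁, Fl a h₁ → h₁ ∈ H → ∀ h₂, Fl b h₂ → h₂ ∈ H → False := by
    intro h₁ hh₁ hh₁H h₂ hh₂ hh₂H
    have hsepH : SepIn G H h₁ h₂ (R ∩ H) := by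
      refine ⟨fun hc => (hFsub a h₁ hh₁).2 hc.1, fun hc => (hFsub b h₂ hh₂).2 hc.1, ?_⟩
      intro p hp
      by_contra hnone
      push_neg at hnone
      have hsupp : ∀ x ∈ p.support, x ∈ A' \ R := by
        intro x hx
        exact ⟨hHA' (hp x hx), fun hxR => hnone x hx ⟨hxR, hp x hx⟩⟩
      exact hdisj h₂ (hh₁.trans ⟨p, hsupp⟩) hh₂
    obtain ⟨Rm, hRmsub, hRmsep, hRmmin⟩ := exists_min_sepIn hsepH
    exact hH.2.1 (cms_up (fun x hx => (hRmsub hx).2)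
      (hRcl.subset (fun x hx => (hRmsub hx).1)) hh₁H hh₂H hRmsep hRmmin)
  have final : ∀ c d, c ∈ A' → c ∉ R → d ∈ A' → d ∉ R →
      (∀ z, Fl c z → z ∉ H) → (∀ z, Fl c z → Fl d z → False) →
      ∃ R' : Set V, G.IsClique R' ∧ A ⊆ R' ∧ (H \ R').Nonempty := by
    intro c d hcA hcR hdA hdR hFH hcd
    have hcF : Fl c c := WkIn.refl ⟨hcA, hcR⟩
    have hdF : Fl d d := WkIn.refl ⟨hdA, hdR⟩
    have hFX : ∀ z, Fl c z → z ∈ X := by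
      intro z hz
      rcases (hFsub c z hz).1 with h1 | h1
      · exact absurd h1 (hFH z hz)
      · exact h1
    have hclos : ∀ f, Fl c f → ∀ z, G.Adj f z → z ∈ A' → z ∉ R → Fl c z := by
      intro f hf z hadj hzA hzR
      exact hf.trans (WkIn.adj hadj (hFsub c f hf) ⟨hzA, hzR⟩)
    by_cases hRX : (R ∩ X).Nonempty
    · -- contradiction with minimality of X
      exfalso
      obtain ⟨ρ, hρR, hρX⟩ := hRX
      have hρF : ¬ Fl c ρ := fun hc => (hFsub c ρ hc).2 hρR
      have hbd : ∀ w ∈ X \ {z | Fl c z}, ∀ f ∈ {z | Fl c z}, G.Adj w f → w ∈ R ∩ X := by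
        intro w hw f hf hadj
        by_contra hwR
        have hwR' : w ∉ R := fun hc => hwR ⟨hc, hw.1⟩
        exact hw.2 (hclos f hf w hadj.symm (hXA' hw.1) hwR')
      refine hXmin (X \ {z | Fl c z}) ⟨(Set.diff_subset).trans hXM,
        ⟨ρ, hρX, hρF⟩, ?_, ?_⟩ ⟨Set.diff_subset, fun hc => ?_⟩
      · -- connectivity via surgery
        intro z hz t ht
        obtain ⟨p, hp⟩ := hXconn z hz.1 t ht.1
        refine surgery (B := X \ {z | Fl c z}) (F := {z | Fl c z}) (R := R ∩ X)
          ?_ (hRcl.subset Set.inter_subset_left) ?_ hbd p.length p le_rfl ?_ hz ht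
        · intro x hx
          exact ⟨hx.2, fun hc => (hFsub c x hc).2 hx.1⟩
        · exact fun f hf hc => hc.2 hf
        · intro x hx
          by_cases hxF : Fl c x
          · exact Or.inr hxF
          · exact Or.inl ⟨hp x hx, hxF⟩
      · -- A still attaches
        intro α hα
        obtain ⟨x₁, hx₁X, hadj₁⟩ := hXA α hα
        by_cases hx₁F : Fl c x₁
        · have hαH : α ∈ H := hAH hα
          have hαF : ¬ Fl c α := fun hc => hFH α hc hαH
          have hαR : α ∈ R := by
            by_contra hαR
            exact hαF (hclos x₁ hx₁F α hadj₁.symm (hHA' hαH) hαR)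
          have hαρ : α ≠ ρ := by
            intro hc
            exact (hM.2.1 (hXM hρX)) (hc ▸ hαH)
          exact ⟨ρ, ⟨hρX, hρF⟩, hRcl hαR hρR hαρ⟩
        · exact ⟨x₁, ⟨hx₁X, hx₁F⟩, hadj₁⟩
      · -- properness
        exact (hc (hFX c hcF)).2 hcF
    · -- R ∩ X empty : produce R
      have hXF : ∀ z ∈ X, Fl c z := by
        intro z hz
        obtain ⟨p, hp⟩ := hXconn c (hFX c hcF) z hz
        exact hcF.trans ⟨p, fun x hx =>
          ⟨hXA' (hp x hx), fun hxR => hRX ⟨x, hxR, hp x hx⟩⟩⟩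
      have hAR : A ⊆ R := by
        intro α hα
        by_contra hαR
        obtain ⟨x₁, hx₁X, hadj₁⟩ := hXA α hα
        exact hFH α (hclos x₁ (hXF x₁ hx₁X) α hadj₁.symm (hHA' (hAH hα)) hαR) (hAH hα)
      have hdH : d ∈ H := by
        rcases (hFsub d d hdF).1 with h1 | h1
        · exact h1
        · exact absurd (hXF d h1) (fun hc => hcd d hc hdF)
      exact ⟨R, hRcl, hAR, ⟨d, hdH, hdR⟩⟩
  by_cases hcase : ∀ z, Fl a z → z ∉ H
  · exact final a b haA' hsep.1 hbA' hsep.2.1 hcase hdisj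
  · push_neg at hcase
    obtain ⟨h₁, hh₁, hh₁H⟩ := hcase
    have hFbH : ∀ z, Fl b z → z ∉ H := fun z hz hzH => honeH h₁ hh₁ hh₁H z hz hzH
    exact final b a hbA' hsep.2.1 haA' hsep.1 hFbH (fun z h1 h2 => hdisj z h2 h1)

end AtomCMS


open AtomCMS in
theorem atom_complement_component_nbhd_is_clique_min_sep [Fintype V]
    (G : SimpleGraph V) (hG : G.Connected) (H M : Set V)
    (hH : GraphAtom G H) (hne : H ≠ Set.univ) (hM : CompOf G Hᶜ M) :
    CliqueMinSep G (Nbhd G M) := by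
  classical
  set S := Nbhd G M with hSdef
  have hSM : ∀ x ∈ S, x ∉ M := fun x hx => hx.1
  have hHM : ∀ x ∈ M, x ∉ H := fun x hx => hM.2.1 hx
  -- S ⊆ H
  have hSH : S ⊆ H := by
    intro v hv
    obtain ⟨hvM, x, hxM, hadj⟩ := hv
    by_contra hvH
    have hY : insert v M = M := by
      apply hM.2.2.2 (insert v M) (Set.subset_insert v M)
      · intro z hz
        rcases hz with rfl | hz
        · exact hvH
        · exact hM.2.1 hz
      · apply connected_of_wkIn ⟨v, Set.mem_insert v M⟩
        have hvx : WkIn G (insert v M) v x :=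
          WkIn.adj hadj (Set.mem_insert v M) (Set.subset_insert v M hxM)
        have hMw : ∀ z ∈ M, WkIn G (insert v M) z x := fun z hz =>
          (wkIn_of_connected hM.2.2.1 hz hxM).mono (Set.subset_insert v M)
        intro z hz t ht
        rcases hz with rfl | hz <;> rcases ht with rfl | ht
        · exact WkIn.refl (Set.mem_insert _ M)
        · exact hvx.trans (hMw t ht).symm
        · exact (hMw z hz).trans hvx.symm
        · exact (hMw z hz).trans (hMw t ht).symm
    exact hvM (hY ▸ Set.mem_insert v M)
  -- S is a clique
  have hclq : G.IsClique S := by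
    intro x hx y hy hxy
    by_contra hadj
    obtain ⟨R, hRcl, hsub, -⟩ := master G H M hH hM {x, y} ⟨x, by simp⟩
      (by intro z hz; rcases hz with rfl | rfl; exacts [hSH hx, hSH hy])
      (by intro z hz; rcases hz with rfl | rfl; exacts [hx, hy])
    exact hadj (hRcl (hsub (by simp)) (hsub (by simp)) hxy)
  -- H \ S is nonempty
  have hHS : (H \ S).Nonempty := by
    by_contra hc
    have hsub : H ⊆ S := by
      intro z hz
      by_contra hzS
      exact hc ⟨z, hz, hzS⟩
    have hHne : H.Nonempty := by
      obtain ⟨⟨z, hz⟩⟩ := hH.1.nonempty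
      exact ⟨z, hz⟩
    obtain ⟨R, -, hsub2, hne2⟩ := master G H M hH hM H hHne le_rfl hsub
    obtain ⟨z, hzH, hzR⟩ := hne2
    exact hzR (hsub2 hzH)
  -- every vertex of S has a neighbour in H \ S
  have hL4 : ∀ s ∈ S, ∃ h, h ∈ H \ S ∧ G.Adj s h := by
    intro s hs
    by_contra hc
    push_neg at hc
    obtain ⟨h₀, hh₀⟩ := hHS
    set NH : Set V := {x | x ∈ H ∧ G.Adj s x} with hNHdef
    have hNHS : NH ⊆ S := by
      intro x hx
      by_contra hxS
      exact (hc x ⟨hx.1, hxS⟩) hx.2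
    have hsepNH : SepIn G H s h₀ NH := by
      refine ⟨fun hcs => G.irrefl hcs.2, fun hch => (hc h₀ hh₀) hch.2, ?_⟩
      intro p hp
      cases p with
      | nil => exact absurd hs hh₀.2
      | cons hadj q =>
        exact ⟨_, by simp [Walk.start_mem_support],
          ⟨hp _ (by simp [Walk.start_mem_support]), hadj⟩⟩
    obtain ⟨Rm, hRmsub, hRmsep, hRmmin⟩ := exists_min_sepIn hsepNH
    exact hH.2.1 (cms_up (fun x hx => (hRmsub hx).1)
      ((hclq.subset hNHS).subset hRmsub) (hSH hs) hh₀.1 hRmsep hRmmin)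
  -- H \ S is connected
  have hL5 : ∀ h₁ ∈ H \ S, ∀ h₂ ∈ H \ S, WkIn G (H \ S) h₁ h₂ := by
    intro h₁ hh₁ h₂ hh₂
    by_contra hno
    have hsep5 : SepIn G H h₁ h₂ S := by
      refine ⟨hh₁.2, hh₂.2, ?_⟩
      intro p hp
      by_contra hnone
      push_neg at hnone
      exact hno ⟨p, fun x hx => ⟨hp x hx, hnone x hx⟩⟩
    obtain ⟨Rm, hRmsub, hRmsep, hRmmin⟩ := exists_min_sepIn hsep5
    exact hH.2.1 (cms_up (fun x hx => hSH (hRmsub hx)) (hclq.subset hRmsub)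
      hh₁.1 hh₂.1 hRmsep hRmmin)
  -- assemble
  obtain ⟨u, huM⟩ := hM.1
  obtain ⟨v, hvH, hvS⟩ := hHS
  have hvM : v ∉ M := fun hc => hHM v hc hvH
  have huS : u ∉ S := fun hc => hSM u hc huM
  refine ⟨hclq, u, v, ⟨huS, hvS, ?_⟩, ?_⟩
  · -- separation
    have key : ∀ {w t : V} (p : G.Walk w t), w ∈ M → t ∉ M → ∃ x ∈ p.support, x ∈ S := by
      intro w t p
      induction p with
      | nil => exact fun hw ht => absurd hw ht
      | @cons c e _ hadj q ih =>
        intro hw ht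
        by_cases heM : e ∈ M
        · obtain ⟨x, hx, hxS⟩ := ih heM ht
          exact ⟨x, by simp [hx], hxS⟩
        · exact ⟨e, by simp [Walk.start_mem_support], ⟨heM, c, hw, hadj.symm⟩⟩
    exact fun p => key p huM hvM
  · -- minimality
    intro S' hS' hsep'
    obtain ⟨s, hsS, hsS'⟩ := Set.exists_of_ssubset hS'
    have hsS0 := hsS
    obtain ⟨hsM, ms, hmsM, hadjs⟩ := hsS
    obtain ⟨hvert, hh2, hadj2⟩ := hL4 s hsS0
    obtain ⟨p₁, hp₁⟩ := wkIn_of_connected hM.2.2.1 huM hmsM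
    obtain ⟨p₃, hp₃⟩ := hL5 hvert hh2 v ⟨hvH, hvS⟩
    set pp : G.Walk u v := p₁.append (Walk.cons hadjs.symm (Walk.cons hadj2 p₃)) with hppdef
    obtain ⟨x, hx, hxS'⟩ := hsep'.2.2 pp
    have hxS : x ∈ S := hS'.subset hxS'
    rcases (Walk.mem_support_append_iff _ _).mp hx with h1 | h1
    · exact hSM x hxS (hp₁ x h1)
    · rw [Walk.support_cons] at h1
      rcases List.mem_cons.mp h1 with rfl | h1
      · exact hSM x hxS hmsM
      · rw [Walk.support_cons] at h1
        rcases List.mem_cons.mp h1 with rfl | h1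
        · exact hsS' hxS'
        · exact (hp₃ x h1).2 hxS
end

section
/- If G_H is an atom of a connected graph G, M is a connected component of G − H, and S = N_G(M), then S is complete in G: every two distinct vertices of S are adjacent. -/
open SimpleGraph

variable {V : Type*}

namespace AtomAux

variable {G : SimpleGraph V}

/-- A walk between `x` and `y` whose support stays inside `A`. -/
def WIn (G : SimpleGraph V) (A : Set V) (x y : V) : Prop :=
  ∃ p : G.Walk x y, ∀ z ∈ p.support, z ∈ A

lemma WIn.mem_left {A : Set V} {x y : V} (h : WIn G A x y) : x ∈ A := by
  obtain ⟨p, hp⟩ := h; exact hp x p.start_mem_support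

lemma WIn.mem_right {A : Set V} {x y : V} (h : WIn G A x y) : y ∈ A := by
  obtain ⟨p, hp⟩ := h; exact hp y p.end_mem_support

lemma WIn.refl {A : Set V} {x : V} (hx : x ∈ A) : WIn G A x x :=
  ⟨SimpleGraph.Walk.nil, by simpa using hx⟩

lemma WIn.symm {A : Set V} {x y : V} (h : WIn G A x y) : WIn G A y x := by
  obtain ⟨p, hp⟩ := h
  exact ⟨p.reverse, fun z hz => hp z (by
    rw [SimpleGraph.Walk.support_reverse] at hz; exact List.mem_reverse.mp hz)⟩

lemma WIn.trans {A : Set V} {x y z : V} (h : WIn G A x y) (h' : WIn G A y z) :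
    WIn G A x z := by
  obtain ⟨p, hp⟩ := h; obtain ⟨q, hq⟩ := h'
  refine ⟨p.append q, fun w hw => ?_⟩
  rw [SimpleGraph.Walk.support_append] at hw
  rcases List.mem_append.mp hw with h1 | h1
  · exact hp w h1
  · exact hq w (List.mem_of_mem_tail h1)

lemma WIn.mono {A B : Set V} (hAB : A ⊆ B) {x y : V} (h : WIn G A x y) : WIn G B x y := by
  obtain ⟨p, hp⟩ := h; exact ⟨p, fun z hz => hAB (hp z hz)⟩

lemma WIn.adj_right {A : Set V} {x y z : V} (h : WIn G A x y) (hyz : G.Adj y z)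
    (hz : z ∈ A) : WIn G A x z :=
  h.trans ⟨SimpleGraph.Walk.cons hyz SimpleGraph.Walk.nil, by
    intro w hw; simp [SimpleGraph.Walk.support_cons] at hw
    rcases hw with rfl | rfl
    · exact h.mem_right
    · exact hz⟩

lemma induce_walk_exists {A : Set V} {x y : ↥A} (q : (G.induce A).Walk x y) :
    ∃ p : G.Walk ↑x ↑y, p.support = q.support.map Subtype.val :=
  ⟨q.map (SimpleGraph.Embedding.induce A).toHom, SimpleGraph.Walk.support_map _ _⟩

lemma wIn_of_induce_walk {A : Set V} {x y : ↥A} (q : (G.induce A).Walk x y) :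
    WIn G A ↑x ↑y := by
  obtain ⟨p, hp⟩ := induce_walk_exists q
  refine ⟨p, fun z hz => ?_⟩
  rw [hp] at hz
  obtain ⟨w, _, rfl⟩ := List.mem_map.mp hz
  exact w.2

lemma walk_to_induce {A : Set V} : ∀ {x y : V} (p : G.Walk x y)
    (hp : ∀ z ∈ p.support, z ∈ A) (hx : x ∈ A) (hy : y ∈ A),
    ∃ q : (G.induce A).Walk ⟨x, hx⟩ ⟨y, hy⟩, ∀ z ∈ q.support, ↑z ∈ p.support := by
  intro x y p
  induction p with
  | nil => intro hp hx hy; exact ⟨SimpleGraph.Walk.nil, by simp⟩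
  | @cons x w y h p ih =>
    intro hp hx hy
    have hw : w ∈ A := hp w (by simp [SimpleGraph.Walk.support_cons])
    obtain ⟨q, hq⟩ := ih (fun z hz => hp z (by simp [SimpleGraph.Walk.support_cons, hz])) hw hy
    refine ⟨SimpleGraph.Walk.cons (by exact h : (G.induce A).Adj ⟨x, hx⟩ ⟨w, hw⟩) q, ?_⟩
    intro z hz
    change z ∈ (⟨x, hx⟩ : ↥A) :: q.support at hz
    rcases List.mem_cons.mp hz with rfl | hz
    · simp [SimpleGraph.Walk.support_cons]
    · simp [SimpleGraph.Walk.support_cons]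
      exact Or.inr (hq z hz)

lemma connected_of_wIn {A : Set V} (hne : A.Nonempty)
    (h : ∀ x ∈ A, ∀ y ∈ A, WIn G A x y) : (G.induce A).Connected := by
  rw [SimpleGraph.connected_iff]
  refine ⟨?_, ⟨⟨hne.choose, hne.choose_spec⟩⟩⟩
  rintro ⟨x, hx⟩ ⟨y, hy⟩
  obtain ⟨p, hp⟩ := h x hx y hy
  obtain ⟨q, _⟩ := walk_to_induce p hp hx hy
  exact ⟨q⟩

lemma wIn_of_connected {A : Set V} (h : (G.induce A).Connected) {x y : V}
    (hx : x ∈ A) (hy : y ∈ A) : WIn G A x y := by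
  obtain ⟨q⟩ := h.preconnected ⟨x, hx⟩ ⟨y, hy⟩
  exact wIn_of_induce_walk q

lemma exists_minSepSet {W : Type*} [Finite W] {G' : SimpleGraph W} {u v : W} :
    ∀ (n : ℕ) (X : Set W), X.ncard ≤ n → SepSet G' u v X →
      ∃ X₀, X₀ ⊆ X ∧ MinSepSet G' u v X₀ := by
  intro n
  induction n with
  | zero =>
    intro X hcard hsep
    have hX : X = ∅ := (Set.ncard_eq_zero (Set.toFinite X)).mp (Nat.le_zero.mp hcard)
    subst hX
    exact ⟨∅, subset_rfl, hsep, fun S' hS' => absurd (Set.subset_empty_iff.mp hS'.subset) hS'.ne⟩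
  | succ n ih =>
    intro X hcard hsep
    by_cases h : ∃ X' ⊂ X, SepSet G' u v X'
    · obtain ⟨X', hss, hsep'⟩ := h
      have : X'.ncard ≤ n := by
        have := Set.ncard_lt_ncard hss (Set.toFinite X); omega
      obtain ⟨X₀, h1, h2⟩ := ih X' this hsep'
      exact ⟨X₀, h1.trans hss.subset, h2⟩
    · push_neg at h
      exact ⟨X, subset_rfl, hsep, h⟩

lemma walk_of_chain' : ∀ (l : List V) (x : V), List.Chain' G.Adj (x :: l) →
    ∃ p : G.Walk x ((x :: l).getLast (List.cons_ne_nil x l)), p.support = x :: l := by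
  intro l
  induction l with
  | nil => intro x _; exact ⟨SimpleGraph.Walk.nil, by simp⟩
  | cons z l ih =>
    intro x h
    replace h := List.isChain_cons_cons.mp h
    obtain ⟨q, hq⟩ := ih z h.2
    refine ⟨(SimpleGraph.Walk.cons h.1 q).copy rfl (List.getLast_cons (List.cons_ne_nil z l)).symm, ?_⟩
    rw [SimpleGraph.Walk.support_copy, SimpleGraph.Walk.support_cons, hq]

end AtomAux

theorem atom_complement_component_nbhd_is_complete [Fintype V]
    (G : SimpleGraph V) (hG : G.Connected) (H M S : Set V)
    (hH : GraphAtom G H) (hM : CompOf G Hᶜ M) (hSdef : S = Nbhd G M) :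
    G.IsClique S := by
  classical
  subst hSdef
  obtain ⟨hMne, hMsub, hMconn, hMmax⟩ := hM
  obtain ⟨hHconn, hHnosep, hHmax⟩ := hH
  -- Step 0: the neighborhood of M is contained in H
  have hNbhdH : Nbhd G M ⊆ H := by
    intro s hs
    obtain ⟨hsM, m₀, hm₀, hadj⟩ := hs
    by_contra hsH
    have key : ∀ x ∈ insert s M, AtomAux.WIn G (insert s M) x m₀ := by
      intro x hx
      rcases Set.mem_insert_iff.mp hx with rfl | hx
      · refine ⟨SimpleGraph.Walk.cons hadj SimpleGraph.Walk.nil, ?_⟩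
        intro z hz
        simp only [SimpleGraph.Walk.support_cons, SimpleGraph.Walk.support_nil,
          List.mem_cons, List.mem_singleton] at hz
        rcases hz with rfl | hz
        · exact Set.mem_insert _ _
        · rcases hz with rfl | h
          · exact Set.mem_insert_of_mem _ hm₀
          · exact absurd h List.not_mem_nil
      · exact (AtomAux.wIn_of_connected hMconn hx hm₀).mono (Set.subset_insert _ _)
    have hY : insert s M = M := by
      refine hMmax _ (Set.subset_insert _ _) ?_ ?_
      · intro z hz
        rcases Set.mem_insert_iff.mp hz with rfl | hz
        · exact hsH
        · exact hMsub hz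
      · exact AtomAux.connected_of_wIn ⟨s, Set.mem_insert _ _⟩
          (fun x hx y hy => ((key x hx).trans (key y hy).symm))
    exact hsM (hY ▸ Set.mem_insert s M)
  intro a ha b hb hab
  by_contra hnadj
  obtain ⟨haM, a', ha'M, haa'⟩ := ha
  obtain ⟨hbM, b', hb'M, hbb'⟩ := hb
  have haH : a ∈ H := hNbhdH ⟨haM, a', ha'M, haa'⟩
  have hbH : b ∈ H := hNbhdH ⟨hbM, b', hb'M, hbb'⟩
  set A : Set V := insert a (insert b M) with hA
  have haA : a ∈ A := Set.mem_insert _ _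
  have hbA : b ∈ A := Set.mem_insert_of_mem _ (Set.mem_insert _ _)
  have hMA : M ⊆ A := fun z hz => Set.mem_insert_of_mem _ (Set.mem_insert_of_mem _ hz)
  -- a walk from a to b inside A
  have hW0 : AtomAux.WIn G A a b := by
    have w1 : AtomAux.WIn G A a a' :=
      (AtomAux.WIn.refl haA).adj_right haa' (hMA ha'M)
    have w2 : AtomAux.WIn G A a' b' :=
      (AtomAux.wIn_of_connected hMconn ha'M hb'M).mono hMA
    have w3 : AtomAux.WIn G A b' b :=
      (AtomAux.WIn.refl (hMA hb'M)).adj_right hbb'.symm hbA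
    exact (w1.trans w2).trans w3
  have hPex : ∃ n : ℕ, ∃ p : G.Walk a b, p.length = n ∧ ∀ z ∈ p.support, z ∈ A := by
    obtain ⟨p, hp⟩ := hW0
    exact ⟨p.length, p, rfl, hp⟩
  set n := Nat.find hPex with hn
  obtain ⟨p₁, hp₁len, hp₁A⟩ := Nat.find_spec hPex
  have hmin : ∀ p : G.Walk a b, (∀ z ∈ p.support, z ∈ A) → n ≤ p.length :=
    fun p h => Nat.find_min' hPex ⟨p, rfl, h⟩
  set q := p₁.bypass with hq
  have hqpath : q.IsPath := p₁.bypass_isPath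
  have hqA : ∀ z ∈ q.support, z ∈ A := fun z hz => hp₁A z (p₁.support_bypass_subset hz)
  have hqlen : q.length = n := by
    have h1 : q.length ≤ n := by rw [hn, ← hp₁len]; exact p₁.length_bypass_le
    exact le_antisymm h1 (hmin q hqA)
  set L := q.support with hL
  have hLlen : L.length = n + 1 := by
    rw [hL, SimpleGraph.Walk.length_support, hqlen]
  have hchain : L.Chain' G.Adj := q.isChain_adj_support
  have hnodup : L.Nodup := hqpath.support_nodup
  have hLA : ∀ z ∈ L, z ∈ A := hqA
  set x : ℕ → V := fun i => L.getD i a with hx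
  have hxget : ∀ (i : ℕ) (h : i ≤ n), x i = L[i]'(by omega) :=
    fun i h => List.getD_eq_getElem L a (by omega)
  have hLtail : L = a :: L.tail := q.support_eq_cons
  have hx0 : x 0 = a := by
    show L.getD 0 a = a
    rw [hLtail]; rfl
  have hxn : x n = b := by
    have h1 : L.reverse = b :: L.reverse.tail := by
      rw [hL, ← SimpleGraph.Walk.support_reverse]
      exact q.reverse.support_eq_cons
    have h2 : L.getLast? = some b := by
      rw [← List.head?_reverse, h1]; rfl
    have h3 : L.getLast? = some (L[n]'(by omega)) := by
      rw [List.getLast?_eq_getElem?, show L.length - 1 = n by omega]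
      exact List.getElem?_eq_getElem (by omega)
    rw [hxget n le_rfl]
    have := h3.symm.trans h2
    exact Option.some_injective _ this
  have hadjx : ∀ i, i < n → G.Adj (x i) (x (i + 1)) := by
    intro i hi
    have h := List.isChain_iff_getElem.mp hchain i (by omega)
    rw [hxget i (by omega), hxget (i + 1) (by omega)]
    exact h
  have hinj : ∀ i j, i ≤ n → j ≤ n → x i = x j → i = j := by
    intro i j hi hj hxy
    rw [hxget i hi, hxget j hj] at hxy
    exact (hnodup.getElem_inj_iff).mp hxy
  have hmemL : ∀ i, i ≤ n → x i ∈ L := fun i h => by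
    rw [hxget i h]; exact List.getElem_mem _
  have hn0 : n ≠ 0 := by
    intro h
    exact hab (SimpleGraph.Walk.eq_of_length_eq_zero (by rw [hqlen, h]))
  have hn1 : n ≠ 1 := by
    intro h
    have h1 := hadjx 0 (by omega)
    rw [hx0, show (0 + 1 : ℕ) = n by omega, hxn] at h1
    exact hnadj h1
  have hn2 : 2 ≤ n := by omega
  -- segment walks along the path
  have hseg : ∀ (B : Set V) (i d : ℕ), i + d ≤ n →
      (∀ t, i ≤ t → t ≤ i + d → x t ∈ B) → AtomAux.WIn G B (x i) (x (i + d)) := by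
    intro B i d
    induction d with
    | zero => intro _ hB; exact AtomAux.WIn.refl (hB i le_rfl (by omega))
    | succ d ih =>
      intro hle hB
      have w := ih (by omega) (fun t h1 h2 => hB t h1 (by omega))
      have hadj1 : G.Adj (x (i + d)) (x (i + d + 1)) := hadjx _ (by omega)
      exact w.adj_right hadj1 (hB (i + d + 1) (by omega) (by omega))
  have hseg' : ∀ (B : Set V) (i j : ℕ), i ≤ j → j ≤ n →
      (∀ t, i ≤ t → t ≤ j → x t ∈ B) → AtomAux.WIn G B (x i) (x j) := by
    intro B i j h1 h2 hB
    have := hseg B i (j - i) (by omega) (fun t ht1 ht2 => hB t ht1 (by omega))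
    simpa [show i + (j - i) = j by omega] using this
  set H' : Set V := H ∪ {z | z ∈ L} with hH'
  have hLH' : ∀ z ∈ L, z ∈ H' := fun z hz => Or.inr hz
  have hHH' : H ⊆ H' := Set.subset_union_left
  have hH'conn : (G.induce H').Connected := by
    refine AtomAux.connected_of_wIn ⟨a, Or.inl haH⟩ ?_
    have reach : ∀ y ∈ H', AtomAux.WIn G H' y a := by
      intro y hy
      rcases hy with hy | hy
      · exact (AtomAux.wIn_of_connected hHconn hy haH).mono hHH'
      · obtain ⟨i, hilt, hieq⟩ := List.getElem_of_mem hy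
        have hi : i ≤ n := by omega
        have seg := hseg' H' 0 i (by omega) hi
          (fun t _ ht2 => hLH' _ (hmemL t (by omega)))
        rw [hx0] at seg
        have : x i = y := by rw [hxget i hi]; exact hieq
        rw [this] at seg
        exact seg.symm
    exact fun y hy z hz => (reach y hy).trans (reach z hz).symm
  have hx1M : x 1 ∈ M := by
    have h1 : x 1 ∈ A := hLA _ (hmemL 1 (by omega))
    rcases Set.mem_insert_iff.mp h1 with heq | h1
    · exact absurd (hinj 1 0 (by omega) (by omega) (heq.trans hx0.symm)) (by omega)
    rcases Set.mem_insert_iff.mp h1 with heq | h1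
    · exact absurd (hinj 1 n (by omega) le_rfl (heq.trans hxn.symm)) (by omega)
    · exact h1
  have hH'neH : H' ≠ H := by
    intro h
    exact (hMsub hx1M) (h ▸ hLH' _ (hmemL 1 (by omega)))
  have hT : ∃ T : Set ↥H', CliqueMinSep (G.induce H') T := by
    by_contra hT
    exact hH'neH (hHmax H' hHH' hH'conn hT)
  obtain ⟨T, hTclique, u, v, hTmin⟩ := hT
  set T' : Set V := Subtype.val '' T with hT'def
  have hT'clique : ∀ {y z : V}, y ∈ T' → z ∈ T' → y ≠ z → G.Adj y z := by
    rintro _ _ ⟨y₀, hy₀, rfl⟩ ⟨z₀, hz₀, rfl⟩ hne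
    exact hTclique hy₀ hz₀ (fun h => hne (congrArg Subtype.val h))
  obtain ⟨huT, hvT, hwalks⟩ := hTmin.1
  have hu'T : (↑u : V) ∉ T' := by
    rintro ⟨t, ht, hteq⟩
    exact huT (by rwa [Subtype.val_injective hteq] at ht)
  have hv'T : (↑v : V) ∉ T' := by
    rintro ⟨t, ht, hteq⟩
    exact hvT (by rwa [Subtype.val_injective hteq] at ht)
  have hsepV : ∀ (pw : G.Walk (↑u : V) (↑v : V)), (∀ z ∈ pw.support, z ∈ H') →
      ∃ z ∈ pw.support, z ∈ T' := by
    intro pw hpw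
    obtain ⟨qw, hqw⟩ := AtomAux.walk_to_induce pw hpw u.2 v.2
    obtain ⟨z₀, hz₀supp, hz₀T⟩ := hwalks qw
    exact ⟨↑z₀, hqw z₀ hz₀supp, ⟨z₀, hz₀T, rfl⟩⟩
  have hNoUV : ¬ AtomAux.WIn G (H' \ T') ↑u ↑v := by
    rintro ⟨pw, hpw⟩
    obtain ⟨z, hz1, hz2⟩ := hsepV pw (fun z hz => (hpw z hz).1)
    exact (hpw z hz1).2 hz2
  -- H minus a clique is connected (no clique separator in an atom)
  have hHfree : ∀ h₁, h₁ ∈ H \ T' → ∀ h₂, h₂ ∈ H \ T' →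
      AtomAux.WIn G (H \ T') h₁ h₂ := by
    intro h₁ hh₁ h₂ hh₂
    by_contra hno
    have hsep : SepSet (G.induce H) ⟨h₁, hh₁.1⟩ ⟨h₂, hh₂.1⟩ {w : ↥H | ↑w ∈ T'} := by
      refine ⟨fun hc => hh₁.2 hc, fun hc => hh₂.2 hc, ?_⟩
      intro qw
      obtain ⟨pw, hpw⟩ := AtomAux.induce_walk_exists qw
      by_cases hcase : ∀ z ∈ pw.support, z ∉ T'
      · exfalso
        apply hno
        refine ⟨pw, fun z hz => ?_⟩
        have hzH : z ∈ H := by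
          rw [hpw] at hz
          obtain ⟨w, _, rfl⟩ := List.mem_map.mp hz
          exact w.2
        exact ⟨hzH, hcase z hz⟩
      · push_neg at hcase
        obtain ⟨z, hz1, hz2⟩ := hcase
        rw [hpw] at hz1
        obtain ⟨w, hw1, rfl⟩ := List.mem_map.mp hz1
        exact ⟨w, hw1, hz2⟩
    obtain ⟨X₀, hX₀sub, hX₀min⟩ := AtomAux.exists_minSepSet _ _ le_rfl hsep
    refine hHnosep ⟨X₀, ?_, ⟨h₁, hh₁.1⟩, ⟨h₂, hh₂.1⟩, hX₀min⟩
    intro y₀ hy₀ z₀ hz₀ hne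
    exact hT'clique (hX₀sub hy₀) (hX₀sub hz₀) (Subtype.coe_injective.ne hne)
  -- pick the endpoint whose side avoids H
  have hnotboth : ¬ ((∃ h ∈ H, AtomAux.WIn G (H' \ T') ↑u h) ∧
      (∃ h ∈ H, AtomAux.WIn G (H' \ T') ↑v h)) := by
    rintro ⟨⟨h₁, hh₁, w₁⟩, ⟨h₂, hh₂, w₂⟩⟩
    have m₁ : h₁ ∈ H \ T' := ⟨hh₁, (w₁.mem_right).2⟩
    have m₂ : h₂ ∈ H \ T' := ⟨hh₂, (w₂.mem_right).2⟩
    have wmid := (hHfree _ m₁ _ m₂).mono (fun z hz => (⟨Or.inl hz.1, hz.2⟩ : z ∈ H' \ T'))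
    exact hNoUV ((w₁.trans wmid).trans w₂.symm)
  have hwx : ∃ w : ↥H', (↑w : V) ∉ T' ∧ ¬ ∃ h ∈ H, AtomAux.WIn G (H' \ T') ↑w h := by
    by_cases hbu : ∃ h ∈ H, AtomAux.WIn G (H' \ T') ↑u h
    · exact ⟨v, hv'T, fun hc => hnotboth ⟨hbu, hc⟩⟩
    · exact ⟨u, hu'T, hbu⟩
  obtain ⟨w, hwT', hwbad⟩ := hwx
  have hwH : (↑w : V) ∉ H := fun h => hwbad ⟨↑w, h, AtomAux.WIn.refl ⟨w.2, hwT'⟩⟩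
  have hwL : (↑w : V) ∈ L := by
    rcases w.2 with h | h
    · exact absurd h hwH
    · exact h
  obtain ⟨m, hm_le, hm_eq⟩ : ∃ m, m ≤ n ∧ x m = ↑w := by
    obtain ⟨i, hilt, hieq⟩ := List.getElem_of_mem hwL
    exact ⟨i, by omega, by rw [hxget i (by omega)]; exact hieq⟩
  have hm0 : m ≠ 0 := by
    intro h
    exact hwH (by rw [← hm_eq, h, hx0]; exact haH)
  have hmn : m ≠ n := by
    intro h
    exact hwH (by rw [← hm_eq, h, hxn]; exact hbH)
  -- the maximal clean interval around m
  have hPex1 : ∃ i, i ≤ m ∧ ∀ t, i ≤ t → t ≤ m → x t ∉ T' :=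
    ⟨m, le_rfl, fun t h1 h2 => by rw [show t = m by omega, hm_eq]; exact hwT'⟩
  set i₀ := Nat.find hPex1 with hi₀def
  obtain ⟨hi₀m, hi₀clean⟩ := Nat.find_spec hPex1
  have hi₀pos : i₀ ≠ 0 := by
    intro h0
    apply hwbad
    refine ⟨a, haH, ?_⟩
    have seg := hseg' (H' \ T') 0 m (by omega) (by omega)
      (fun t ht1 ht2 => ⟨hLH' _ (hmemL t (by omega)), hi₀clean t (by omega) ht2⟩)
    rw [hx0, hm_eq] at seg
    exact seg.symm
  have hxi₀ : x (i₀ - 1) ∈ T' := by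
    have hlt : i₀ - 1 < i₀ := by omega
    have hnp := Nat.find_min hPex1 hlt
    push_neg at hnp
    obtain ⟨t, ht1, ht2, ht3⟩ := hnp (by omega)
    by_cases h : i₀ ≤ t
    · exact absurd ht3 (hi₀clean t h ht2)
    · rwa [show t = i₀ - 1 by omega] at ht3
  have hQm : (fun j => j ≤ n ∧ m ≤ j ∧ ∀ t, m ≤ t → t ≤ j → x t ∉ T') m :=
    ⟨hm_le, le_rfl, fun t h1 h2 => by rw [show t = m by omega, hm_eq]; exact hwT'⟩
  set j₀ := Nat.findGreatest (fun j => j ≤ n ∧ m ≤ j ∧ ∀ t, m ≤ t → t ≤ j → x t ∉ T') n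
    with hj₀def
  obtain ⟨hj₀n, hmj₀, hj₀clean⟩ :
      j₀ ≤ n ∧ m ≤ j₀ ∧ ∀ t, m ≤ t → t ≤ j₀ → x t ∉ T' :=
    Nat.findGreatest_spec
      (P := fun j => j ≤ n ∧ m ≤ j ∧ ∀ t, m ≤ t → t ≤ j → x t ∉ T') hm_le hQm
  have hj₀lt : j₀ ≠ n := by
    intro hju
    apply hwbad
    refine ⟨b, hbH, ?_⟩
    have seg := hseg' (H' \ T') m n hm_le le_rfl
      (fun t ht1 ht2 => ⟨hLH' _ (hmemL t ht2), hj₀clean t ht1 (by omega)⟩)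
    rw [hxn, hm_eq] at seg
    exact seg
  have hxj₀ : x (j₀ + 1) ∈ T' := by
    have hj₀succ : j₀ + 1 ≤ n := Nat.succ_le_of_lt (Nat.lt_of_le_of_ne hj₀n hj₀lt)
    have hng : ¬ (j₀ + 1 ≤ n ∧ m ≤ j₀ + 1 ∧ ∀ t, m ≤ t → t ≤ j₀ + 1 → x t ∉ T') :=
      Nat.findGreatest_is_greatest
        (P := fun j => j ≤ n ∧ m ≤ j ∧ ∀ t, m ≤ t → t ≤ j → x t ∉ T')
        (Nat.lt_succ_self j₀) hj₀succ
    push_neg at hng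
    obtain ⟨t, ht1, ht2, ht3⟩ := hng hj₀succ (Nat.le_succ_of_le hmj₀)
    by_cases h : t ≤ j₀
    · exact absurd ht3 (hj₀clean t ht1 h)
    · rwa [show t = j₀ + 1 by omega] at ht3
  -- the shortcut
  have hne_st : x (i₀ - 1) ≠ x (j₀ + 1) := by
    intro h
    have := hinj _ _ (by omega) (by omega) h
    omega
  have hadj_st : G.Adj (x (i₀ - 1)) (x (j₀ + 1)) := hT'clique hxi₀ hxj₀ hne_st
  have htake : L.take i₀ = L.take (i₀ - 1) ++ [L[i₀ - 1]'(by omega)] := by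
    conv_lhs => rw [show i₀ = (i₀ - 1) + 1 by omega]
    rw [List.take_succ, List.getElem?_eq_getElem (by omega)]
    rfl
  have hchainL' : (L.take i₀ ++ L.drop (j₀ + 1)).Chain' G.Adj := by
    refine List.IsChain.append (hchain.take _) (hchain.drop _) ?_
    intro p hp r hr
    have hp' : p = x (i₀ - 1) := by
      rw [htake, List.getLast?_concat] at hp
      rw [hxget (i₀ - 1) (by omega)]
      exact (Option.some_injective _ hp.symm)
    have hr' : r = x (j₀ + 1) := by
      rw [List.head?_drop, List.getElem?_eq_getElem (by omega)] at hr
      rw [hxget (j₀ + 1) (by omega)]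
      exact (Option.some_injective _ hr.symm)
    rw [hp', hr']
    exact hadj_st
  have hL'cons : L.take i₀ ++ L.drop (j₀ + 1)
      = a :: (L.tail.take (i₀ - 1) ++ L.drop (j₀ + 1)) := by
    have h1 : L.take i₀ = a :: L.tail.take (i₀ - 1) := by
      conv_lhs => rw [hLtail]
      rw [List.take_cons (by omega)]
    rw [h1, List.cons_append]
  have hlast? : (L.take i₀ ++ L.drop (j₀ + 1)).getLast? = some b := by
    have hdropne : L.drop (j₀ + 1) ≠ [] := by
      intro h
      have := congrArg List.length h
      rw [List.length_drop, hLlen] at this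
      simp at this
      omega
    rw [List.getLast?_append_of_ne_nil _ hdropne, List.getLast?_drop]
    rw [hLlen]
    have h2 : L.getLast? = some b := by
      have h1 : L.reverse = b :: L.reverse.tail := by
        rw [hL, ← SimpleGraph.Walk.support_reverse]
        exact q.reverse.support_eq_cons
      rw [← List.head?_reverse, h1]; rfl
    rw [if_neg (by omega)]
    exact h2
  obtain ⟨pw, hpwsupp⟩ := AtomAux.walk_of_chain'
    (L.tail.take (i₀ - 1) ++ L.drop (j₀ + 1)) a (hL'cons ▸ hchainL')
  have hlasteq : (a :: (L.tail.take (i₀ - 1) ++ L.drop (j₀ + 1))).getLast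
      (List.cons_ne_nil _ _) = b := by
    have := hlast?
    rw [hL'cons] at this
    rw [List.getLast?_eq_getLast (List.cons_ne_nil _ _)] at this
    exact Option.some_injective _ this
  set pw' := pw.copy rfl hlasteq with hpw'def
  have hsupp : pw'.support = L.take i₀ ++ L.drop (j₀ + 1) := by
    rw [hpw'def, SimpleGraph.Walk.support_copy, hpwsupp, hL'cons]
  have hsubA : ∀ z ∈ pw'.support, z ∈ A := by
    intro z hz
    rw [hsupp] at hz
    rcases List.mem_append.mp hz with h | h
    · exact hLA z (List.take_subset _ _ h)
    · exact hLA z (List.drop_subset _ _ h)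
  have hsublen : pw'.length < n := by
    have hlen : pw'.support.length = (L.take i₀ ++ L.drop (j₀ + 1)).length := by
      rw [hsupp]
    rw [SimpleGraph.Walk.length_support, List.length_append, List.length_take,
      List.length_drop, hLlen] at hlen
    omega
  exact absurd (hmin _ hsubA) (by omega)
end

section
/- If S is a clique separator of a connected graph G (removal of the complete set S disconnects G) and H is a vertex set such that the induced subgraph G_H is connected and contains vertices in two distinct components of G − S, then G_H contains a clique separator of G_H, namely S ∩ H; in particular, an atom of G cannot meet two distinct components of G − S for any clique minimal separator S of G. -/
open SimpleGraph

variable {V : Type*}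

theorem clique_sep_restricts_and_atom_avoids [Fintype V]
    (G : SimpleGraph V) (hG : G.Connected) :
    (∀ (S H : Set V) (x y : V), CliqueSep G S → (G.induce H).Connected →
      x ∈ H → y ∈ H → SepSet G x y S →
      CliqueSep (G.induce H) (Subtype.val ⁻¹' S)) ∧
    (∀ (H S : Set V) (x y : V), GraphAtom G H → CliqueMinSep G S →
      x ∈ H → y ∈ H → ¬ SepSet G x y S) := by
  have main : ∀ (S H : Set V) (x y : V), CliqueSep G S → (G.induce H).Connected →
      x ∈ H → y ∈ H → SepSet G x y S →
      CliqueSep (G.induce H) (Subtype.val ⁻¹' S) := by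
    intro S H x y hCS _hHconn hxH hyH hsep
    obtain ⟨hclique, -⟩ := hCS
    refine ⟨?_, ⟨⟨x, hxH⟩, ⟨y, hyH⟩, hsep.1, hsep.2.1, ?_⟩⟩
    · intro a ha b hb hab
      exact hclique ha hb (fun h => hab (Subtype.coe_injective h))
    · intro p
      obtain ⟨z, hz, hzS⟩ := hsep.2.2 (p.map (SimpleGraph.Hom.comap Subtype.val G))
      erw [SimpleGraph.Walk.support_map, List.mem_map] at hz
      obtain ⟨w, hw, rfl⟩ := hz
      exact ⟨w, hw, hzS⟩
  refine ⟨main, ?_⟩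
  intro H S x y hAtom hCMS hxH hyH hsep
  obtain ⟨hclique, u, v, huv⟩ := hCMS
  have hCS : CliqueSep (G.induce H) (Subtype.val ⁻¹' S) :=
    main S H x y ⟨hclique, u, v, huv.1⟩ hAtom.1 hxH hyH hsep
  apply hAtom.2.1
  obtain ⟨hclique', a, b, hab⟩ := hCS
  -- find a minimal subset of `Subtype.val ⁻¹' S` that still separates a from b
  have : ∃ S' ∈ {T : Set H | T ⊆ Subtype.val ⁻¹' S ∧ SepSet (G.induce H) a b T},
      ∀ T ∈ {T : Set H | T ⊆ Subtype.val ⁻¹' S ∧ SepSet (G.induce H) a b T}, ¬ T < S' := by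
    apply WellFounded.has_min wellFounded_lt
    exact ⟨Subtype.val ⁻¹' S, le_refl _, hab⟩
  obtain ⟨S', ⟨hS'sub, hS'sep⟩, hmin⟩ := this
  refine ⟨S', hclique'.subset hS'sub, a, b, hS'sep, ?_⟩
  intro T hT hTsep
  exact hmin T ⟨le_trans hT.le hS'sub, hTsep⟩ hT
end

section
/- Every vertex of a connected graph G belongs to at least one atom of G, and hence the atoms of G cover V. -/
open SimpleGraph

variable {V : Type*}

theorem atoms_cover [Fintype V] (G : SimpleGraph V) (hG : G.Connected) :
    (∀ v : V, ∃ H : Set V, GraphAtom G H ∧ v ∈ H) ∧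
    ⋃₀ {H : Set V | GraphAtom G H} = Set.univ := by
  classical
  have main : ∀ v : V, ∃ H : Set V, GraphAtom G H ∧ v ∈ H := by
    intro v
    set F : Set (Set V) := {H | v ∈ H ∧ (G.induce H).Connected ∧
      ¬∃ S : Set H, CliqueMinSep (G.induce H) S} with hF
    have hsing : ({v} : Set V) ∈ F := by
      refine ⟨rfl, ?_, ?_⟩
      · have : Nonempty ↥({v} : Set V) := ⟨⟨v, rfl⟩⟩
        constructor
        intro a b
        have hab : a = b := Subtype.ext (a.2.trans b.2.symm)
        exact hab ▸ SimpleGraph.Reachable.refl a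
      · rintro ⟨S, hcl, u, w, ⟨⟨huS, hwS, hsep⟩, _⟩⟩
        have huw : u = w := Subtype.ext (u.2.trans w.2.symm)
        subst huw
        obtain ⟨x, hx, hxS⟩ := hsep SimpleGraph.Walk.nil
        simp at hx
        exact huS (hx ▸ hxS)
    obtain ⟨H, hHF, hmax⟩ := Set.Finite.exists_maximalFor id F (Set.toFinite F) ⟨_, hsing⟩
    exact ⟨H, ⟨hHF.2.1, hHF.2.2, fun H' hsub hconn hno =>
      Set.Subset.antisymm (hmax (j := H') ⟨hsub hHF.1, hconn, hno⟩ hsub) hsub⟩, hHF.1⟩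
  refine ⟨main, ?_⟩
  ext v
  simp only [Set.mem_sUnion, Set.mem_univ, iff_true, Set.mem_setOf_eq]
  obtain ⟨H, h1, h2⟩ := main v
  exact ⟨H, h1, h2⟩
end
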